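/- arXiv:1301.7356 — 7 statements merged into one kernel-verified Lean document; each statement's English description precedes it below -/
import Mathlib

section
/- Given a finite undirected graph G and a real vector a indexed by the vertices, there exists a real vector x indexed by the edges such that for every vertex v the sum of x_e over edges incident to v equals a_v, if and only if for every bipartite connected component C of G with bipartition (U_C, W_C), the sum of a_v over U_C equals the sum of a_v over W_C. -/
open Finset
open scoped Classical

variable {V E : Type}

/-- Adjacency in a multigraph given by its endpoint function. -/
def Adj (ends : E → Sym2 V) (u w : V) : Prop := ∃ e, ends e = s(u, w)

/-- Reachability (walks of any length). -/
def Reach (ends : E → Sym2 V) : V → V → Prop := Relation.ReflTransGen (Adj ends)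

/-- The connected component of a vertex, as a vertex set. -/
def component (ends : E → Sym2 V) (v : V) : Set V := {w | Reach ends v w}

/-- Reachability using only edges in `D`. -/
def ReachOn (ends : E → Sym2 V) (D : Set E) (u w : V) : Prop :=
  Relation.ReflTransGen (fun a b => ∃ e ∈ D, ends e = s(a, b)) u w

/-- Component of `v` in the spanning subgraph with edge set `D`. -/
def componentOn (ends : E → Sym2 V) (D : Set E) (v : V) : Set V := {w | ReachOn ends D v w}

/-- A vertex set is bipartite if it admits a proper 2-colouring of all edges
incident to it (equivalently, no odd cycle inside it). -/
def BipartiteOn (ends : E → Sym2 V) (S : Set V) : Prop :=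
  ∃ f : V → Bool, ∀ (e : E) (u w : V), ends e = s(u, w) → u ∈ S → f u ≠ f w

/-- The number of bipartite connected components. -/
noncomputable def numBipComp [Fintype V] (ends : E → Sym2 V) : ℕ :=
  Set.ncard {S : Set V | (∃ v, S = component ends v) ∧ BipartiteOn ends S}

/-- The real incidence matrix: entry `(v, e)` is `1` iff `v` is an endpoint of `e`
(a loop contributes a single `1`). -/
noncomputable def incMatrix (ends : E → Sym2 V) : Matrix V E ℝ :=
  fun v e => if v ∈ ends e then (1 : ℝ) else 0

/-- Degree of `v` in the edge set `F`, with loops counted twice. -/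
noncomputable def degIn (ends : E → Sym2 V) (F : Finset E) (v : V) : ℕ :=
  ∑ e ∈ F, (if ends e = s(v, v) then 2 else if v ∈ ends e then 1 else 0)

/-- An edge set is a cycle iff it is nonempty, every vertex has degree 0 or 2 in it,
and its support is connected via its edges.  This includes loops (length-1 cycles)
and pairs of parallel edges (length-2 cycles). -/
def IsCycle (ends : E → Sym2 V) (F : Finset E) : Prop :=
  F.Nonempty ∧ (∀ v : V, degIn ends F v = 0 ∨ degIn ends F v = 2) ∧
    ∀ u w : V, (∃ e ∈ F, u ∈ ends e) → (∃ e ∈ F, w ∈ ends e) → ReachOn ends (↑F) u w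

/-- The cycles whose edges lie in `D` and whose vertices lie in `S`. -/
def CyclesIn (ends : E → Sym2 V) (D : Set E) (S : Set V) : Set (Finset E) :=
  {F | IsCycle ends F ∧ (∀ e ∈ F, e ∈ D) ∧ ∀ e ∈ F, ∀ v : V, v ∈ ends e → v ∈ S}

/-- The part of the graph with edges in `D` and vertices in `S` is acyclic, or
contains exactly one cycle with that cycle having odd length. -/
def AcyclicOrOneOdd (ends : E → Sym2 V) (D : Set E) (S : Set V) : Prop :=
  CyclesIn ends D S = ∅ ∨ ∃ F : Finset E, CyclesIn ends D S = {F} ∧ Odd F.card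

/-- The nullity of a real matrix. -/
noncomputable def nullity {α β : Type} [Fintype β] (A : Matrix α β ℝ) : ℕ :=
  Module.finrank ℝ (LinearMap.ker (Matrix.mulVecLin A))

/-- The fractional perfect `b`-matching polytope of the multigraph. -/
def PGb [Fintype E] (ends : E → Sym2 V) (b : V → ℝ) : Set (E → ℝ) :=
  {x | (∀ e, 0 ≤ x e) ∧ ∀ v : V, ∑ e : E, (if v ∈ ends e then x e else 0) = b v}

lemma sym2_rep (z : Sym2 V) : ∃ p q, z = s(p, q) := Sym2.exists.mp ⟨z, rfl⟩

lemma sum_if_mem_sym2 [Fintype V] (p q : V) (g : V → ℝ) :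
    ∑ u : V, (if u ∈ s(p, q) then g u else 0)
      = if p = q then g p else g p + g q := by
  classical
  simp only [Sym2.mem_iff]
  split_ifs with h
  · subst h
    simp [Finset.sum_ite_eq' Finset.univ p g]
  · rw [← Finset.sum_filter]
    have : Finset.univ.filter (fun u => u = p ∨ u = q) = {p, q} := by
      ext u; simp
    rw [this, Finset.sum_pair h]

lemma adj_symm {ends : E → Sym2 V} {u w : V} (h : Adj ends u w) : Adj ends w u := by
  obtain ⟨e, he⟩ := h; exact ⟨e, by rwa [Sym2.eq_swap]⟩

lemma mem_comp_of_adj {ends : E → Sym2 V} {v u w : V}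
    (hu : u ∈ component ends v) (h : Adj ends u w) : w ∈ component ends v :=
  Relation.ReflTransGen.tail hu h

lemma comp_closed {ends : E → Sym2 V} {v p q : V} (e : E) (he : ends e = s(p, q)) :
    (p ∈ component ends v ↔ q ∈ component ends v) :=
  ⟨fun hp => mem_comp_of_adj hp ⟨e, he⟩, fun hq => mem_comp_of_adj hq (adj_symm ⟨e, he⟩)⟩

lemma fredholm {m n : Type} [Fintype m] [Fintype n] (A : Matrix m n ℝ) (a : m → ℝ)
    (h : ∀ y : m → ℝ, (∀ j, ∑ i, A i j * y i = 0) → ∑ i, y i * a i = 0) :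
    ∃ x : n → ℝ, A.mulVec x = a := by
  classical
  set T := Matrix.toEuclideanLin A with hT
  set K := LinearMap.range T with hK
  have hKK : Kᗮᗮ = K := Submodule.orthogonal_orthogonal K
  have ha : ((WithLp.equiv 2 (m → ℝ)).symm a) ∈ Kᗮᗮ := by
    rw [Submodule.mem_orthogonal]
    intro y hy
    have hy' : ∀ j, ∑ i, A i j * (WithLp.equiv 2 (m → ℝ)) y i = 0 := by
      intro j
      have := (Submodule.mem_orthogonal' _ _).mp hy
        (T ((WithLp.equiv 2 (n → ℝ)).symm (Pi.single j 1))) ⟨_, rfl⟩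
      rw [Matrix.toEuclideanLin_apply] at this
      simpa [EuclideanSpace.inner_eq_star_dotProduct, dotProduct, Matrix.mulVec,
        Pi.single_apply, mul_comm] using this
    have := h _ hy'
    simpa [EuclideanSpace.inner_eq_star_dotProduct, dotProduct, mul_comm] using this
  rw [hKK] at ha
  obtain ⟨x, hx⟩ := ha
  exact ⟨(WithLp.equiv 2 (n → ℝ)) x, by
    have := congrArg (WithLp.equiv 2 (m → ℝ)) hx
    simpa [hT, Matrix.toEuclideanLin_apply] using this⟩

lemma kernel_orth [Fintype V] [Fintype E] (ends : E → Sym2 V) (a : V → ℝ)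
    (H : ∀ (v : V) (f : V → Bool),
        (∀ (e : E) (u w : V), ends e = s(u, w) → u ∈ component ends v → f u ≠ f w) →
        ∑ u : V, (if u ∈ component ends v ∧ f u = true then a u else 0)
          = ∑ u : V, (if u ∈ component ends v ∧ f u = false then a u else 0)) :
    ∀ y : V → ℝ, (∀ e, ∑ u : V, (if u ∈ ends e then y u else 0) = 0) →
      ∑ u : V, y u * a u = 0 := by
  classical
  suffices h : ∀ n (y : V → ℝ), (univ.filter (fun u => y u ≠ 0)).card ≤ n →
      (∀ e, ∑ u : V, (if u ∈ ends e then y u else 0) = 0) → ∑ u : V, y u * a u = 0 by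
    exact fun y hy => h _ y le_rfl hy
  intro n
  induction n with
  | zero =>
    intro y hcard _
    have h0 : ∀ u, y u = 0 := by
      intro u
      by_contra hu
      have : u ∈ univ.filter (fun u => y u ≠ 0) := mem_filter.mpr ⟨mem_univ u, hu⟩
      rw [Finset.card_eq_zero.mp (Nat.le_zero.mp hcard)] at this
      exact absurd this (Finset.notMem_empty u)
    simp [h0]
  | succ n ih =>
    intro y hcard hker
    by_cases h0 : ∀ u, y u = 0
    · simp [h0]
    push_neg at h0
    obtain ⟨v, hv⟩ := h0
    have hadj : ∀ (p q : V) (e : E), ends e = s(p, q) → y p = - y q := by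
      intro p q e he
      have h1 := hker e
      rw [he, sum_if_mem_sym2] at h1
      split_ifs at h1 with h
      · subst h; linarith
      · linarith
    have halt : ∀ w ∈ component ends v, y w = y v ∨ y w = - y v := by
      intro w hw
      induction hw with
      | refl => exact Or.inl rfl
      | @tail b c _ hbc ih2 =>
        obtain ⟨e, he⟩ := hbc
        have hbc' : y b = - y c := hadj b c e he
        rcases ih2 with h | h
        · right; linarith
        · left; linarith
    set f : V → Bool := fun u => decide (y u = y v) with hf
    have hproper : ∀ (e : E) (p q : V), ends e = s(p, q) →
        p ∈ component ends v → f p ≠ f q := by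
      intro e p q he hp
      have hq : q ∈ component ends v := (comp_closed e he).1 hp
      have hpq : y p = - y q := hadj p q e he
      simp only [hf, ne_eq, decide_eq_decide]
      intro hiff
      rcases halt p hp with h1 | h1
      · have h2 := hiff.mp h1
        apply hv; linarith
      · have h3 : y p ≠ y v := by intro h; apply hv; linarith
        have h2 : y q ≠ y v := fun h => h3 (hiff.mpr h)
        apply h2; linarith [halt q hq]
      -- note: last case may need fixing
    have hsum := H v f hproper
    have hCsum : ∑ u : V, (if u ∈ component ends v then y u * a u else 0) = 0 := by
      have key : ∀ u : V, (if u ∈ component ends v then y u * a u else 0)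
          = y v * (if u ∈ component ends v ∧ f u = true then a u else 0)
            - y v * (if u ∈ component ends v ∧ f u = false then a u else 0) := by
        intro u
        by_cases hu : u ∈ component ends v
        · rcases halt u hu with h | h
          · have hfu : f u = true := by simp [hf, h]
            simp [hu, hfu, h]
          · have hfu : f u = false := by
              simp only [hf, decide_eq_false_iff_not]
              intro hh; apply hv; linarith
            simp only [hu, hfu, if_pos, true_and, and_true]
            norm_num [h]
        · simp [hu]
      rw [Finset.sum_congr rfl (fun u _ => key u), Finset.sum_sub_distrib,
        ← Finset.mul_sum, ← Finset.mul_sum, hsum]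
      ring
    set y' : V → ℝ := fun u => if u ∈ component ends v then 0 else y u with hy'
    have hker' : ∀ e, ∑ u : V, (if u ∈ ends e then y' u else 0) = 0 := by
      intro e
      obtain ⟨p, q, he⟩ := sym2_rep (ends e)
      have horig := hker e
      rw [he, sum_if_mem_sym2] at horig ⊢
      by_cases hp : p ∈ component ends v
      · have hq := (comp_closed e he).1 hp
        simp [hy', hp, hq]
      · have hq : q ∉ component ends v := fun h => hp ((comp_closed e he).2 h)
        simpa [hy', hp, hq] using horig
    have hsupp : (univ.filter (fun u => y' u ≠ 0)).card ≤ n := by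
      have hss : univ.filter (fun u => y' u ≠ 0) ⊂ univ.filter (fun u => y u ≠ 0) := by
        constructor
        · intro u hu
          simp only [mem_filter, mem_univ, true_and, hy'] at hu ⊢
          by_cases h : u ∈ component ends v
          · simp [h] at hu
          · simpa [h] using hu
        · intro hsub
          have hvmem : v ∈ univ.filter (fun u => y u ≠ 0) := mem_filter.mpr ⟨mem_univ v, hv⟩
          have := hsub hvmem
          simp only [mem_filter, mem_univ, true_and, hy'] at this
          have hvC : v ∈ component ends v := Relation.ReflTransGen.refl
          simp [hvC] at this
      have := Finset.card_lt_card hss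
      omega
    have hind := ih y' hsupp hker'
    have hsplit : ∑ u : V, y u * a u
        = ∑ u : V, (if u ∈ component ends v then y u * a u else 0) + ∑ u : V, y' u * a u := by
      rw [← Finset.sum_add_distrib]
      apply Finset.sum_congr rfl
      intro u _
      by_cases hu : u ∈ component ends v <;> simp [hy', hu]
    rw [hsplit, hCsum, hind, add_zero]

theorem exists_incidence_solution_iff [Fintype V] [Fintype E] (ends : E → Sym2 V)
    (a : V → ℝ) :
    (∃ x : E → ℝ, ∀ v : V, ∑ e : E, (if v ∈ ends e then x e else 0) = a v) ↔
      ∀ (v : V) (f : V → Bool),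
        (∀ (e : E) (u w : V), ends e = s(u, w) → u ∈ component ends v → f u ≠ f w) →
        ∑ u : V, (if u ∈ component ends v ∧ f u = true then a u else 0)
          = ∑ u : V, (if u ∈ component ends v ∧ f u = false then a u else 0) := by
  classical
  constructor
  · rintro ⟨x, hx⟩ v f hf
    set y : V → ℝ := fun u => if u ∈ component ends v then (if f u then 1 else -1) else 0
      with hy
    have hzero : ∀ e : E, ∑ u : V, (if u ∈ ends e then y u else 0) = 0 := by
      intro e
      obtain ⟨p, q, he⟩ := sym2_rep (ends e)
      rw [he, sum_if_mem_sym2]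
      split_ifs with h
      · subst h
        by_cases hp : p ∈ component ends v
        · exact absurd rfl (hf e p p he hp)
        · simp [hy, hp]
      · by_cases hp : p ∈ component ends v
        · have hq : q ∈ component ends v := (comp_closed e he).1 hp
          have hne := hf e p q he hp
          cases hfp : f p <;> cases hfq : f q
          · exact absurd (hfp.trans hfq.symm) hne
          · have h1 : y p = -1 := by simp [hy, hp, hfp]
            have h2 : y q = 1 := by simp [hy, hq, hfq]
            rw [h1, h2]; ring
          · have h1 : y p = 1 := by simp [hy, hp, hfp]
            have h2 : y q = -1 := by simp [hy, hq, hfq]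
            rw [h1, h2]; ring
          · exact absurd (hfp.trans hfq.symm) hne
        · have hq : q ∉ component ends v := fun hh => hp ((comp_closed e he).2 hh)
          simp [hy, hp, hq]
    have hmain : ∑ u : V, y u * a u = 0 := by
      calc ∑ u : V, y u * a u
          = ∑ u : V, ∑ e : E, (if u ∈ ends e then y u * x e else 0) := by
            apply Finset.sum_congr rfl
            intro u _
            rw [← hx u, Finset.mul_sum]
            apply Finset.sum_congr rfl
            intro e _
            split_ifs <;> simp
        _ = ∑ e : E, ∑ u : V, (if u ∈ ends e then y u * x e else 0) := Finset.sum_comm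
        _ = ∑ e : E, (∑ u : V, (if u ∈ ends e then y u else 0)) * x e := by
            apply Finset.sum_congr rfl
            intro e _
            rw [Finset.sum_mul]
            apply Finset.sum_congr rfl
            intro u _
            split_ifs <;> simp
        _ = 0 := by
            apply Finset.sum_eq_zero
            intro e _
            rw [hzero e, zero_mul]
    have hdiff : ∑ u : V, y u * a u
        = ∑ u : V, (if u ∈ component ends v ∧ f u = true then a u else 0)
          - ∑ u : V, (if u ∈ component ends v ∧ f u = false then a u else 0) := by
      rw [← Finset.sum_sub_distrib]
      apply Finset.sum_congr rfl
      intro u _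
      by_cases hu : u ∈ component ends v
      · cases hfu : f u <;> simp [hy, hu, hfu]
      · simp [hy, hu]
    linarith [hdiff ▸ hmain]
  · intro H
    have h := fredholm (fun v e => if v ∈ ends e then (1 : ℝ) else 0) a ?_
    · obtain ⟨x, hx⟩ := h
      refine ⟨x, fun v => ?_⟩
      have := congrFun hx v
      simp only [Matrix.mulVec, dotProduct] at this
      rw [← this]
      apply Finset.sum_congr rfl
      intro e _
      split_ifs <;> simp
    · intro y hy
      apply kernel_orth ends a H y
      intro e
      have h2 : ∑ u : V, (if u ∈ ends e then y u else 0)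
          = ∑ i : V, (fun v e => if v ∈ ends e then (1 : ℝ) else 0) i e * y i := by
        apply Finset.sum_congr rfl
        intro u _
        show (if u ∈ ends e then y u else 0) = (if u ∈ ends e then (1:ℝ) else 0) * y u
        split_ifs <;> simp
      rw [h2]
      exact hy e
end

section
/- Let P = {x ∈ R^N : x_i ≥ 0 for all i, A x = a} be a polytope, let F be a nonempty face of P with support N' = {i ∈ N : some x ∈ F has x_i ≠ 0}, and let A' be the submatrix of A consisting of the columns indexed by N'. Then F is affinely isomorphic to the polytope F' = {y ∈ R^{N'} : y_i ≥ 0 for all i ∈ N', A' y = a}, and the dimension of F equals the nullity of A'. -/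
open scoped Classical

/-- The polyhedron `{x ≥ 0 : A x = a}`. -/
def stdPolytope {M N : Type} [Fintype N] (A : Matrix M N ℝ) (a : M → ℝ) :
    Set (N → ℝ) :=
  {x | (∀ i, 0 ≤ x i) ∧ A.mulVec x = a}

/-- The support of a set of vectors. -/
def setSupp {N : Type} (X : Set (N → ℝ)) : Set N := {i | ∃ x ∈ X, x i ≠ 0}

/-- The submatrix of `A` on the columns indexed by `S`. -/
def colSub {M N : Type} (A : Matrix M N ℝ) (S : Set N) : Matrix M S ℝ :=
  A.submatrix id (Subtype.val)

/-- The dimension of a subset of a real vector space: the dimension of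
the direction of its affine span. -/
noncomputable def setDim {N : Type} (F : Set (N → ℝ)) : ℕ :=
  Module.finrank ℝ (affineSpan ℝ F).direction

lemma restrict_mulVec {M N : Type} [Fintype M] [Fintype N] (A : Matrix M N ℝ)
    (S : Set N) (x : N → ℝ) (hx : ∀ i ∉ S, x i = 0) :
    (colSub A S).mulVec (fun i : S => x (i : N)) = A.mulVec x := by
  funext j
  simp only [Matrix.mulVec, dotProduct, colSub, Matrix.submatrix_apply, id_eq]
  rw [Finset.sum_set_coe (f := fun i => A j i * x i)]
  refine Finset.sum_subset (Finset.subset_univ _) ?_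
  intro i _ hi
  rw [hx i (by simpa using hi), mul_zero]

/-- Choosing a small positive scalar making finitely many linear conditions hold. -/
lemma exists_pos_scalar {N : Type} [Fintype N] (z w : N → ℝ) (hz : ∀ i, 0 ≤ z i)
    (hw : ∀ i, 0 < w i → 0 < z i) : ∃ t : ℝ, 0 < t ∧ ∀ i, t * w i ≤ z i := by
  classical
  set T : Finset ℝ :=
    insert 1 (Finset.univ.image fun i => if w i ≤ 0 then 1 else z i / w i) with hT
  have hTne : T.Nonempty := ⟨1, Finset.mem_insert_self _ _⟩
  refine ⟨T.min' hTne, ?_, ?_⟩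
  · have : ∀ r ∈ T, 0 < r := by
      intro r hr
      rcases Finset.mem_insert.1 hr with h | h
      · rw [h]; exact one_pos
      · obtain ⟨i, _, rfl⟩ := Finset.mem_image.1 h
        split_ifs with h1
        · exact one_pos
        · push_neg at h1
          exact div_pos (hw i h1) h1
    exact this _ (T.min'_mem hTne)
  · intro i
    have hle : T.min' hTne ≤ if w i ≤ 0 then 1 else z i / w i :=
      T.min'_le _ (Finset.mem_insert_of_mem (Finset.mem_image_of_mem _ (Finset.mem_univ i)))
    have htpos : 0 < T.min' hTne := by
      have : ∀ r ∈ T, 0 < r := by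
        intro r hr
        rcases Finset.mem_insert.1 hr with h | h
        · rw [h]; exact one_pos
        · obtain ⟨j, _, rfl⟩ := Finset.mem_image.1 h
          split_ifs with h1
          · exact one_pos
          · push_neg at h1
            exact div_pos (hw j h1) h1
      exact this _ (T.min'_mem hTne)
    by_cases h1 : w i ≤ 0
    · calc T.min' hTne * w i ≤ 0 := mul_nonpos_of_nonneg_of_nonpos htpos.le h1
        _ ≤ z i := hz i
    · push_neg at h1
      rw [if_neg (not_le.2 h1)] at hle
      calc T.min' hTne * w i ≤ (z i / w i) * w i := by nlinarith
        _ = z i := div_mul_cancel₀ _ h1.ne'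

theorem face_iso_and_dim {M N : Type} [Fintype M] [Fintype N]
    (A : Matrix M N ℝ) (a : M → ℝ)
    (hbdd : Bornology.IsBounded (stdPolytope A a))
    (F : Set (N → ℝ)) (hF : IsExposed ℝ (stdPolytope A a) F) (hne : F.Nonempty) :
    (∃ φ : (N → ℝ) →ᵃ[ℝ] ((setSupp F) → ℝ),
        Set.InjOn φ F ∧
        φ '' F = {y : (setSupp F) → ℝ |
          (∀ i, 0 ≤ y i) ∧ (colSub A (setSupp F)).mulVec y = a}) ∧
    setDim F = nullity (colSub A (setSupp F)) := by
  set S := setSupp F with hSdef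
  have hsupp : ∀ x ∈ F, ∀ i, i ∉ S → x i = 0 := by
    intro x hx i hi
    by_contra h
    exact hi ⟨x, hx, h⟩
  obtain ⟨l, hlF⟩ := hF hne
  have hFP : F ⊆ stdPolytope A a := by
    rw [hlF]; exact fun x hx => hx.1
  have hPconv : Convex ℝ (stdPolytope A a) := by
    intro x hx y hy c d hc hd hcd
    constructor
    · intro i
      have h1 := hx.1 i; have h2 := hy.1 i
      simp only [Pi.add_apply, Pi.smul_apply, smul_eq_mul]
      exact add_nonneg (mul_nonneg hc h1) (mul_nonneg hd h2)
    · rw [Matrix.mulVec_add, Matrix.mulVec_smul, Matrix.mulVec_smul, hx.2, hy.2,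
        ← add_smul, hcd, one_smul]
  have hFconv : Convex ℝ F := hF.convex hPconv
  -- an interior point of F with positive coordinates on S
  have hzex : ∃ z ∈ F, ∀ i ∈ S, 0 < z i := by
    have hchoice : ∀ i : S, ∃ x, x ∈ F ∧ x (i : N) ≠ 0 := by
      intro i; obtain ⟨x, hx, hxi⟩ := i.2; exact ⟨x, hx, hxi⟩
    choose g hgF hgne using hchoice
    obtain ⟨x₀, hx₀⟩ := hne
    set n := Fintype.card S with hn
    have hnpos : (0:ℝ) < (n : ℝ) + 1 := by positivity
    refine ⟨((n : ℝ) + 1)⁻¹ • (x₀ + ∑ i : S, g i), ?_, ?_⟩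
    · have hsum := hFconv.sum_mem (t := (Finset.univ : Finset (Option S)))
        (w := fun _ => ((n:ℝ)+1)⁻¹) (z := fun o => Option.elim o x₀ (fun i => g i))
        (fun _ _ => by positivity)
        (by
          rw [Finset.sum_const, Finset.card_univ, Fintype.card_option, nsmul_eq_mul]
          push_cast
          rw [mul_inv_cancel₀ hnpos.ne'])
        (by rintro (_ | i) _
            · exact hx₀
            · exact hgF i)
      have heq : (∑ o : Option S, ((n:ℝ)+1)⁻¹ • (Option.elim o x₀ fun i => g i))
          = ((n : ℝ) + 1)⁻¹ • (x₀ + ∑ i : S, g i) := by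
        rw [Fintype.sum_option, smul_add, Finset.smul_sum]
        rfl
      rwa [heq] at hsum
    · intro i hi
      have hx0i : 0 ≤ x₀ i := (hFP hx₀).1 i
      have hgnn : ∀ j : S, 0 ≤ g j i := fun j => (hFP (hgF j)).1 i
      have hsumpos : 0 < ∑ j : S, g j i := by
        refine Finset.sum_pos' (fun j _ => hgnn j) ⟨⟨i, hi⟩, Finset.mem_univ _, ?_⟩
        exact lt_of_le_of_ne (hgnn ⟨i, hi⟩) (Ne.symm (hgne ⟨i, hi⟩))
      have heq : (((n : ℝ) + 1)⁻¹ • (x₀ + ∑ j : S, g j)) i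
          = ((n:ℝ)+1)⁻¹ * (x₀ i + ∑ j : S, g j i) := by
        simp [Finset.sum_apply]
      rw [heq]
      have : 0 < x₀ i + ∑ j : S, g j i := by linarith
      positivity
  obtain ⟨zpt, hzF, hzpos⟩ := hzex
  have hzP : zpt ∈ stdPolytope A a := hFP hzF
  -- the key claim: any point of the polytope supported on S lies in F
  have hkey : ∀ x ∈ stdPolytope A a, (∀ i ∉ S, x i = 0) → x ∈ F := by
    intro x hxP hxS
    have hzsupp := hsupp zpt hzF
    obtain ⟨t, htpos, htle⟩ := exists_pos_scalar zpt (x - zpt) (hzP.1)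
      (by
        intro i hi
        simp only [Pi.sub_apply, sub_pos] at hi
        have hiS : i ∈ S := by
          by_contra hiS
          rw [hxS i hiS, hzsupp i hiS] at hi
          linarith
        exact hzpos i hiS)
    have hpP : zpt + t • (zpt - x) ∈ stdPolytope A a := by
      constructor
      · intro i
        have h2 := htle i
        simp only [Pi.sub_apply] at h2
        have := hzP.1 i
        simp only [Pi.add_apply, Pi.smul_apply, Pi.sub_apply, smul_eq_mul]
        nlinarith
      · rw [Matrix.mulVec_add, Matrix.mulVec_smul, Matrix.mulVec_sub, hzP.2, hxP.2,
          sub_self, smul_zero, add_zero]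
    have hzmem := hzF
    rw [hlF] at hzmem
    have hlp : l (zpt + t • (zpt - x)) ≤ l zpt := hzmem.2 _ hpP
    have hcomp : l (zpt + t • (zpt - x)) = l zpt + t * (l zpt - l x) := by
      rw [map_add, map_smul, map_sub, smul_eq_mul]
    have hlx : l zpt ≤ l x := by nlinarith
    rw [hlF]
    exact ⟨hxP, fun y hy => le_trans (hzmem.2 y hy) hlx⟩
  -- the affine map
  set φ : (N → ℝ) →ᵃ[ℝ] (S → ℝ) := (LinearMap.funLeft ℝ ℝ ((↑) : S → N)).toAffineMap with hφ
  have hφapp : ∀ x : N → ℝ, φ x = fun i : S => x (i : N) := fun x => rfl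
  constructor
  · refine ⟨φ, ?_, ?_⟩
    · intro x hx y hy hxy
      funext i
      by_cases hi : i ∈ S
      · have := congrFun hxy ⟨i, hi⟩
        simpa [hφapp] using this
      · rw [hsupp x hx i hi, hsupp y hy i hi]
    · ext y
      constructor
      · rintro ⟨x, hxF, rfl⟩
        constructor
        · intro i
          rw [hφapp]
          exact (hFP hxF).1 i
        · rw [hφapp, restrict_mulVec A S x (hsupp x hxF), (hFP hxF).2]
      · rintro ⟨hy1, hy2⟩
        set x : N → ℝ := fun i => if h : i ∈ S then y ⟨i, h⟩ else 0 with hx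
        have hres : (fun i : S => x (i : N)) = y := by
          funext i
          simp only [hx]
          rw [dif_pos i.2]
        have hxS : ∀ i ∉ S, x i = 0 := fun i hi => dif_neg hi
        have hxP : x ∈ stdPolytope A a := by
          constructor
          · intro i
            simp only [hx]
            by_cases h : i ∈ S
            · rw [dif_pos h]; exact hy1 _
            · rw [dif_neg h]
          · rw [← restrict_mulVec A S x hxS, hres, hy2]
        exact ⟨x, hkey x hxP hxS, by rw [hφapp, hres]⟩
  -- the dimension statement
  · set W : Submodule ℝ (N → ℝ) :=
      { carrier := {v | A.mulVec v = 0 ∧ ∀ i ∉ S, v i = 0}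
        add_mem' := by
          rintro u v ⟨hu1, hu2⟩ ⟨hv1, hv2⟩
          refine ⟨by rw [Matrix.mulVec_add, hu1, hv1, add_zero], fun i hi => ?_⟩
          simp [hu2 i hi, hv2 i hi]
        zero_mem' := ⟨by simp, fun i _ => rfl⟩
        smul_mem' := by
          rintro c v ⟨hv1, hv2⟩
          refine ⟨by rw [Matrix.mulVec_smul, hv1, smul_zero], fun i hi => ?_⟩
          simp [hv2 i hi] } with hW
    have hWmem : ∀ v, v ∈ W ↔ A.mulVec v = 0 ∧ ∀ i ∉ S, v i = 0 := fun v => Iff.rfl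
    have hdir : (affineSpan ℝ F).direction = W := by
      rw [direction_affineSpan]
      apply le_antisymm
      · rw [vectorSpan_def, Submodule.span_le]
        rintro v hv
        rw [Set.mem_vsub] at hv
        obtain ⟨x, hx, y, hy, rfl⟩ := hv
        rw [SetLike.mem_coe, hWmem]
        constructor
        · rw [vsub_eq_sub, Matrix.mulVec_sub, (hFP hx).2, (hFP hy).2, sub_self]
        · intro i hi
          rw [vsub_eq_sub]
          simp [hsupp x hx i hi, hsupp y hy i hi]
      · intro v hv
        rw [hWmem] at hv
        obtain ⟨hv1, hv2⟩ := hv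
        obtain ⟨ε, hεpos, hεle⟩ := exists_pos_scalar zpt (-v) (hzP.1)
          (by
            intro i hi
            simp only [Pi.neg_apply, neg_pos] at hi
            have hiS : i ∈ S := by
              by_contra hiS
              rw [hv2 i hiS] at hi
              linarith
            exact hzpos i hiS)
        have hq : zpt + ε • v ∈ F := by
          apply hkey
          · constructor
            · intro i
              have h2 := hεle i
              simp only [Pi.neg_apply] at h2
              simp only [Pi.add_apply, Pi.smul_apply, smul_eq_mul]
              nlinarith
            · rw [Matrix.mulVec_add, Matrix.mulVec_smul, hv1, smul_zero, add_zero, hzP.2]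
          · intro i hi
            simp [hsupp zpt hzF i hi, hv2 i hi]
        have hveq : v = ε⁻¹ • ((zpt + ε • v) -ᵥ zpt) := by
          rw [vsub_eq_sub, add_sub_cancel_left, smul_smul, inv_mul_cancel₀ hεpos.ne', one_smul]
        rw [hveq]
        exact Submodule.smul_mem _ _ (vsub_mem_vectorSpan ℝ hq hzF)
    have hker : ∀ w : W, (LinearMap.funLeft ℝ ℝ ((↑) : S → N)).comp W.subtype w ∈
        LinearMap.ker (Matrix.mulVecLin (colSub A S)) := by
      intro w
      have hw := w.2
      rw [hWmem] at hw
      rw [LinearMap.mem_ker]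
      show Matrix.mulVecLin (colSub A S) (fun i : S => (w : N → ℝ) (i : N)) = 0
      rw [Matrix.mulVecLin_apply, restrict_mulVec A S _ hw.2, hw.1]
    set f : W →ₗ[ℝ] LinearMap.ker (Matrix.mulVecLin (colSub A S)) :=
      LinearMap.codRestrict _ ((LinearMap.funLeft ℝ ℝ ((↑) : S → N)).comp W.subtype) hker with hf
    have hinj : Function.Injective f := by
      intro u w h
      apply Subtype.ext
      funext i
      by_cases hi : i ∈ S
      · have := congrFun (Subtype.ext_iff.1 h) ⟨i, hi⟩
        exact this
      · have hu := u.2; have hw := w.2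
        rw [hWmem] at hu hw
        rw [hu.2 i hi, hw.2 i hi]
    have hsurj : Function.Surjective f := by
      intro y
      set x : N → ℝ := fun i => if h : i ∈ S then y.1 ⟨i, h⟩ else 0 with hx
      have hres : (fun i : S => x (i : N)) = y.1 := by
        funext i
        simp only [hx]
        rw [dif_pos i.2]
      have hxS : ∀ i ∉ S, x i = 0 := fun i hi => dif_neg hi
      have hxW : x ∈ W := by
        rw [hWmem]
        refine ⟨?_, hxS⟩
        have hy := y.2
        rw [LinearMap.mem_ker, Matrix.mulVecLin_apply] at hy
        rw [← restrict_mulVec A S x hxS, hres, hy]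
      refine ⟨⟨x, hxW⟩, ?_⟩
      apply Subtype.ext
      exact hres
    have hsd : setDim F = Module.finrank ℝ W := by
      rw [setDim, hdir]
    rw [hsd, nullity]
    exact LinearEquiv.finrank_eq (LinearEquiv.ofBijective f ⟨hinj, hsurj⟩)
end

section
/- Let u and w be distinct vertices of the polytope P = {x ∈ R^N : x ≥ 0, A x = a}, and let A' be the submatrix of A on the columns indexed by supp(u) ∪ supp(w). Then u and w are the endpoints of an edge (one-dimensional face) of P if and only if the nullity of A' equals 1. -/
open scoped Classical

/- ### Auxiliary lemmas -/

theorem sum_eq_sum_subtype' {N : Type} [Fintype N] (S : Set N) [Fintype S] (f : N → ℝ)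
    (hf : ∀ i ∉ S, f i = 0) : ∑ i : N, f i = ∑ i : S, f i := by
  rw [← Finset.sum_subset (Finset.subset_univ S.toFinset)
      (fun x _ hx => hf x (by simpa using hx))]
  exact (Finset.sum_set_coe (f := f) S).symm

theorem convex_stdPolytope {M N : Type} [Fintype N] (A : Matrix M N ℝ) (a : M → ℝ) :
    Convex ℝ (stdPolytope A a) := by
  rintro x ⟨hx1, hx2⟩ y ⟨hy1, hy2⟩ s t hs ht hst
  refine ⟨fun i => ?_, ?_⟩
  · have := hx1 i; have := hy1 i
    have h : (0:ℝ) ≤ s * x i + t * y i := by positivity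
    simpa using h
  · rw [Matrix.mulVec_add, Matrix.mulVec_smul, Matrix.mulVec_smul, hx2, hy2,
      ← add_smul, hst, one_smul]

/-- Extension by zero of a vector supported on `S`. -/
noncomputable def extS {N : Type} (S : Set N) (z : S → ℝ) : N → ℝ :=
  fun i => if h : i ∈ S then z ⟨i, h⟩ else 0

theorem extS_not_mem {N : Type} {S : Set N} (z : S → ℝ) {i : N} (h : i ∉ S) :
    extS S z i = 0 := dif_neg h

theorem extS_mem {N : Type} {S : Set N} (z : S → ℝ) {i : N} (h : i ∈ S) :
    extS S z i = z ⟨i, h⟩ := dif_pos h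

theorem mulVec_extS {M N : Type} [Fintype M] [Fintype N] (A : Matrix M N ℝ) (S : Set N)
    [Fintype S] (z : S → ℝ) : A.mulVec (extS S z) = (colSub A S).mulVec z := by
  funext j
  show ∑ i : N, A j i * extS S z i = ∑ i : S, (colSub A S) j i * z i
  rw [sum_eq_sum_subtype' S (fun i => A j i * extS S z i)
      (fun i hi => by show A j i * extS S z i = 0; rw [extS_not_mem z hi, mul_zero])]
  refine Finset.sum_congr rfl fun i _ => ?_
  rw [extS_mem z i.2]
  rfl

set_option maxHeartbeats 1000000 in
theorem edge_iff_nullity_one {M N : Type} [Fintype M] [Fintype N]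
    (A : Matrix M N ℝ) (a : M → ℝ)
    (hbdd : Bornology.IsBounded (stdPolytope A a))
    (u w : N → ℝ) (hu : u ∈ Set.extremePoints ℝ (stdPolytope A a))
    (hw : w ∈ Set.extremePoints ℝ (stdPolytope A a)) (huw : u ≠ w) :
    (∃ F : Set (N → ℝ), IsExposed ℝ (stdPolytope A a) F ∧ setDim F = 1 ∧
        Set.extremePoints ℝ F = {u, w}) ↔
      nullity (colSub A {i : N | u i ≠ 0 ∨ w i ≠ 0}) = 1 := by
  classical
  set P := stdPolytope A a with hPdef
  set S : Set N := {i : N | u i ≠ 0 ∨ w i ≠ 0} with hSdef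
  have hPu : u ∈ P := hu.1
  have hPw : w ∈ P := hw.1
  have hvanish : ∀ i ∉ S, u i = 0 ∧ w i = 0 := by
    intro i hi
    simp only [hSdef, Set.mem_setOf_eq, not_or, not_not] at hi
    exact hi
  set v : N → ℝ := u - w with hvdef
  have hvne : v ≠ 0 := sub_ne_zero.mpr huw
  have hvS : ∀ i ∉ S, v i = 0 := fun i hi => by
    simp [hvdef, (hvanish i hi).1, (hvanish i hi).2]
  set v₀ : S → ℝ := fun i => v i with hv₀def
  have hext_v : extS S v₀ = v := by
    funext i
    by_cases h : i ∈ S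
    · rw [extS_mem _ h]
    · rw [extS_not_mem _ h, hvS i h]
  have hv₀ne : v₀ ≠ 0 := by
    intro h0
    apply hvne
    funext i
    by_cases h : i ∈ S
    · have := congrFun h0 ⟨i, h⟩
      simpa [hv₀def] using this
    · exact hvS i h
  have hAv : A.mulVec v = 0 := by
    have h := (Matrix.mulVecLin A).map_sub u w
    simp only [Matrix.mulVecLin_apply] at h
    rw [hvdef, h, hPu.2, hPw.2, sub_self]
  have hv₀ker : v₀ ∈ LinearMap.ker (Matrix.mulVecLin (colSub A S)) := by
    rw [LinearMap.mem_ker, Matrix.mulVecLin_apply, ← mulVec_extS, hext_v, hAv]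
  have hspan_le : (ℝ ∙ v₀) ≤ LinearMap.ker (Matrix.mulVecLin (colSub A S)) :=
    (Submodule.span_singleton_le_iff_mem _ _).mpr hv₀ker
  constructor
  · -- edge ⇒ nullity = 1
    rintro ⟨F, hFexp, hFdim, hFext⟩
    have huF : u ∈ F := extremePoints_subset (hFext ▸ (Set.mem_insert u {w}))
    have hwF : w ∈ F := extremePoints_subset
      (hFext ▸ (Set.mem_insert_of_mem u (Set.mem_singleton w)))
    have hFP : F ⊆ P := hFexp.subset
    have hFconv : Convex ℝ F := hFexp.convex (convex_stdPolytope A a)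
    have hker_le : LinearMap.ker (Matrix.mulVecLin (colSub A S)) ≤ ℝ ∙ v₀ := by
      intro z hz
      set z' : N → ℝ := extS S z with hz'def
      have hAz' : A.mulVec z' = 0 := by
        rw [hz'def, mulVec_extS]
        exact LinearMap.mem_ker.mp hz
      have hz'S : ∀ i ∉ S, z' i = 0 := fun i hi => extS_not_mem z hi
      set m : N → ℝ := (1/2 : ℝ) • u + (1/2 : ℝ) • w with hmdef
      have hmF : m ∈ F := hFconv huF hwF (by norm_num) (by norm_num) (by norm_num)
      have hmP : m ∈ P := hFP hmF
      have hmnonneg : ∀ i, 0 ≤ m i := hmP.1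
      have hmpos : ∀ i ∈ S, 0 < m i := by
        intro i hi
        have h0u := hPu.1 i
        have h0w := hPw.1 i
        have : m i = (1/2) * u i + (1/2) * w i := by simp [hmdef]
        rcases hi with h | h
        · have : 0 < u i := lt_of_le_of_ne h0u (Ne.symm h)
          have h2 : m i = (1/2) * u i + (1/2) * w i := by simp [hmdef]
          nlinarith
        · have : 0 < w i := lt_of_le_of_ne h0w (Ne.symm h)
          have h2 : m i = (1/2) * u i + (1/2) * w i := by simp [hmdef]
          nlinarith
      obtain ⟨i₀, hi₀⟩ : ∃ i, u i ≠ w i := by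
        by_contra h
        push_neg at h
        exact huw (funext h)
      haveI : Nonempty N := ⟨i₀⟩
      set f : N → ℝ := fun i => if z' i = 0 then 1 else m i / |z' i| with hfdef
      set ε : ℝ := Finset.univ.inf' Finset.univ_nonempty f with hεdef
      have hfpos : ∀ i, 0 < f i := by
        intro i
        by_cases h : z' i = 0
        · simp [hfdef, h]
        · have hiS : i ∈ S := by
            by_contra hc
            exact h (hz'S i hc)
          have h1 := hmpos i hiS
          have h2 : 0 < |z' i| := abs_pos.mpr h
          simp only [hfdef, if_neg h]
          positivity
      have hεpos : 0 < ε := by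
        rw [hεdef, Finset.lt_inf'_iff]
        intro i _
        exact hfpos i
      have hbound : ∀ i, ε * |z' i| ≤ m i := by
        intro i
        by_cases h : z' i = 0
        · simp [h, hmnonneg i]
        · have hle : ε ≤ f i := Finset.inf'_le f (Finset.mem_univ i)
          rw [hfdef] at hle
          simp only [if_neg h] at hle
          have h2 : 0 < |z' i| := abs_pos.mpr h
          calc ε * |z' i| ≤ (m i / |z' i|) * |z' i| := by nlinarith
            _ = m i := div_mul_cancel₀ _ (ne_of_gt h2)
      have hmem : ∀ s : ℝ, |s| ≤ ε → m + s • z' ∈ P := by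
        intro s hs
        constructor
        · intro i
          have h1 : |s * z' i| ≤ ε * |z' i| := by
            rw [abs_mul]
            exact mul_le_mul_of_nonneg_right hs (abs_nonneg _)
          have h2 := hbound i
          have h3 := neg_abs_le (s * z' i)
          have : 0 ≤ m i + s * z' i := by linarith
          simpa using this
        · rw [Matrix.mulVec_add, Matrix.mulVec_smul, hAz', hmP.2]
          simp
      obtain ⟨l, hl⟩ := hFexp ⟨u, huF⟩
      have hmF' : m ∈ P ∧ ∀ y ∈ P, l y ≤ l m := by rwa [hl] at hmF
      set p : N → ℝ := m + ε • z' with hpdef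
      set q : N → ℝ := m + (-ε) • z' with hqdef
      have hpP : p ∈ P := hmem ε (le_of_eq (abs_of_pos hεpos))
      have hqP : q ∈ P := hmem (-ε) (le_of_eq (by rw [abs_neg, abs_of_pos hεpos]))
      have hlp : l p ≤ l m := hmF'.2 p hpP
      have hlq : l q ≤ l m := hmF'.2 q hqP
      have hpq : p + q = m + m := by
        rw [hpdef, hqdef]
        module
      have hsum : l p + l q = l m + l m := by
        rw [← map_add, hpq, map_add]
      have hlp' : l p = l m := le_antisymm hlp (by linarith)
      have hlq' : l q = l m := le_antisymm hlq (by linarith)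
      have hpF : p ∈ F := by
        rw [hl]
        exact ⟨hpP, fun y hy => hlp' ▸ hmF'.2 y hy⟩
      have hqF : q ∈ F := by
        rw [hl]
        exact ⟨hqP, fun y hy => hlq' ▸ hmF'.2 y hy⟩
      have hz'span : z' ∈ vectorSpan ℝ F := by
        have hsub : p -ᵥ q ∈ vectorSpan ℝ F := vsub_mem_vectorSpan ℝ hpF hqF
        have hpqv : p - q = (2 * ε) • z' := by
          rw [hpdef, hqdef]
          module
        have h2 : (2 * ε) • z' ∈ vectorSpan ℝ F := by
          rwa [← hpqv]
        have h3 := Submodule.smul_mem _ (1 / (2 * ε)) h2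
        rwa [smul_smul, one_div, inv_mul_cancel₀ (by positivity), one_smul] at h3
      have hvspan : v ∈ vectorSpan ℝ F := by
        have := vsub_mem_vectorSpan ℝ huF hwF
        rwa [hvdef]
      have hdim : Module.finrank ℝ (vectorSpan ℝ F) = 1 := by
        rw [← direction_affineSpan]
        exact hFdim
      have hle2 : (ℝ ∙ v) ≤ vectorSpan ℝ F :=
        (Submodule.span_singleton_le_iff_mem _ _).mpr hvspan
      have heq : (ℝ ∙ v) = vectorSpan ℝ F :=
        Submodule.eq_of_le_of_finrank_eq hle2 (by rw [finrank_span_singleton hvne, hdim])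
      have hz'v : z' ∈ (ℝ ∙ v) := heq ▸ hz'span
      obtain ⟨c, hc⟩ := Submodule.mem_span_singleton.mp hz'v
      refine Submodule.mem_span_singleton.mpr ⟨c, ?_⟩
      funext i
      have h1 : z' i.val = c * v i.val := by
        rw [← hc]; rfl
      have h2 : z' i.val = z i := by
        rw [hz'def, extS_mem z i.2]
      show c * v₀ i = z i
      rw [← h2, h1]
    have hkereq : LinearMap.ker (Matrix.mulVecLin (colSub A S)) = ℝ ∙ v₀ :=
      le_antisymm hker_le hspan_le
    show Module.finrank ℝ (LinearMap.ker (Matrix.mulVecLin (colSub A S))) = 1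
    rw [hkereq]
    exact finrank_span_singleton hv₀ne
  · -- nullity = 1 ⇒ edge
    intro hnull
    have hkereq : (ℝ ∙ v₀) = LinearMap.ker (Matrix.mulVecLin (colSub A S)) :=
      Submodule.eq_of_le_of_finrank_eq hspan_le
        (by rw [finrank_span_singleton hv₀ne]; exact hnull.symm)
    set c : N → ℝ := fun i => if i ∈ S then 0 else -1 with hcdef
    set l₀ : (N → ℝ) →ₗ[ℝ] ℝ := ∑ i : N, c i • LinearMap.proj i with hl₀def
    set l : (N → ℝ) →L[ℝ] ℝ := LinearMap.toContinuousLinearMap l₀ with hldef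
    have hl_apply : ∀ x : N → ℝ, l x = ∑ i : N, c i * x i := by
      intro x
      show l₀ x = _
      rw [hl₀def]
      simp [LinearMap.sum_apply]
    have hl_nonpos : ∀ x ∈ P, l x ≤ 0 := by
      intro x hx
      rw [hl_apply]
      apply Finset.sum_nonpos
      intro i _
      by_cases h : i ∈ S
      · simp [hcdef, h]
      · simp only [hcdef, if_neg h, neg_one_mul, neg_nonpos]
        exact hx.1 i
    have hl_u : l u = 0 := by
      rw [hl_apply]
      apply Finset.sum_eq_zero
      intro i _
      by_cases h : i ∈ S
      · simp [hcdef, h]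
      · simp [hcdef, h, (hvanish i h).1]
    set F : Set (N → ℝ) := {x ∈ P | ∀ y ∈ P, l y ≤ l x} with hFdef
    have hFexp : IsExposed ℝ P F := fun _ => ⟨l, rfl⟩
    have hmemF : ∀ x, x ∈ F ↔ x ∈ P ∧ ∀ i ∉ S, x i = 0 := by
      intro x
      constructor
      · rintro ⟨hxP, hxmax⟩
        refine ⟨hxP, fun i hi => ?_⟩
        have h1 : (0:ℝ) ≤ l x := hl_u ▸ hxmax u hPu
        have h2 : l x ≤ 0 := hl_nonpos x hxP
        have h0 : l x = 0 := le_antisymm h2 h1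
        rw [hl_apply] at h0
        have hterm : c i * x i = 0 := by
          have hnp : ∀ j ∈ Finset.univ, c j * x j ≤ (0:ℝ) := by
            intro j _
            by_cases h : j ∈ S
            · simp [hcdef, h]
            · simp only [hcdef, if_neg h, neg_one_mul, neg_nonpos]
              exact hxP.1 j
          exact (Finset.sum_eq_zero_iff_of_nonpos hnp).mp h0 i (Finset.mem_univ i)
        simp only [hcdef, if_neg hi, neg_one_mul, neg_eq_zero] at hterm
        exact hterm
      · rintro ⟨hxP, hxz⟩
        refine ⟨hxP, fun y hy => ?_⟩
        have hx0 : l x = 0 := by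
          rw [hl_apply]
          apply Finset.sum_eq_zero
          intro i _
          by_cases h : i ∈ S
          · simp [hcdef, h]
          · simp [hcdef, h, hxz i h]
        rw [hx0]
        exact hl_nonpos y hy
    have huF : u ∈ F := (hmemF u).mpr ⟨hPu, fun i hi => (hvanish i hi).1⟩
    have hwF : w ∈ F := (hmemF w).mpr ⟨hPw, fun i hi => (hvanish i hi).2⟩
    have hFseg : F = segment ℝ u w := by
      apply Set.Subset.antisymm
      · intro x hxF
        obtain ⟨hxP, hxz⟩ := (hmemF x).mp hxF
        set d : S → ℝ := fun i => x i - u i with hddef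
        have hextd : extS S d = x - u := by
          funext i
          by_cases h : i ∈ S
          · rw [extS_mem _ h]; rfl
          · rw [extS_not_mem _ h]
            simp [hxz i h, (hvanish i h).1]
        have hdker : d ∈ LinearMap.ker (Matrix.mulVecLin (colSub A S)) := by
          rw [LinearMap.mem_ker, Matrix.mulVecLin_apply, ← mulVec_extS, hextd]
          have h := (Matrix.mulVecLin A).map_sub x u
          simp only [Matrix.mulVecLin_apply] at h
          rw [h, hxP.2, hPu.2, sub_self]
        rw [← hkereq] at hdker
        obtain ⟨t, ht⟩ := Submodule.mem_span_singleton.mp hdker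
        have hxu : x - u = t • v := by
          rw [← hextd, ← ht]
          funext i
          by_cases h : i ∈ S
          · rw [extS_mem _ h]
            simp [hv₀def]
          · rw [extS_not_mem _ h]
            simp [hvS i h]
        have hxi : ∀ i, x i = u i + t * (u i - w i) := by
          intro i
          have := congrFun hxu i
          simp only [Pi.sub_apply, Pi.smul_apply, smul_eq_mul, hvdef] at this
          linarith [this]
        by_cases ht0 : 0 < t
        · exfalso
          have hmem : u ∈ openSegment ℝ w x := by
            refine ⟨t / (t + 1), 1 / (t + 1), by positivity, by positivity, ?_, ?_⟩
            · field_simp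
            · funext i
              have := hxi i
              simp only [Pi.add_apply, Pi.smul_apply, smul_eq_mul]
              field_simp
              nlinarith [hxi i]
          have h := hu.2 hPw hxP hmem
          exact huw h.symm
        · by_cases ht1 : t < -1
          · exfalso
            have hmem : w ∈ openSegment ℝ u x := by
              have htne : t ≠ 0 := by linarith
              refine ⟨(1 + t) / t, -1 / t, ?_, ?_, ?_, ?_⟩
              · apply div_pos_of_neg_of_neg <;> linarith
              · apply div_pos_of_neg_of_neg <;> linarith
              · field_simp; ring
              · funext i
                simp only [Pi.add_apply, Pi.smul_apply, smul_eq_mul]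
                field_simp
                nlinarith [hxi i]
            have h := hw.2 hPu hxP hmem
            exact huw h
          · push_neg at ht0 ht1
            refine ⟨1 + t, -t, by linarith, by linarith, by ring, ?_⟩
            funext i
            simp only [Pi.add_apply, Pi.smul_apply, smul_eq_mul]
            nlinarith [hxi i]
      · intro x hx
        rw [hmemF]
        refine ⟨(convex_stdPolytope A a).segment_subset hPu hPw hx, ?_⟩
        obtain ⟨s, t, hs, ht, hst, rfl⟩ := hx
        intro i hi
        simp [(hvanish i hi).1, (hvanish i hi).2]
    refine ⟨F, hFexp, ?_, ?_⟩
    · show Module.finrank ℝ (affineSpan ℝ F).direction = 1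
      rw [hFseg, ← convexHull_pair, affineSpan_convexHull, direction_affineSpan,
        vectorSpan_pair]
      exact finrank_span_singleton hvne
    · apply Set.Subset.antisymm
      · rw [hFseg, ← convexHull_pair]
        exact extremePoints_convexHull_subset
      · rintro x hx
        rcases hx with rfl | rfl
        · exact ⟨huF, fun x₁ h₁ x₂ h₂ hseg =>
            hu.2 (hFexp.subset h₁) (hFexp.subset h₂) hseg⟩
        · exact ⟨hwF, fun x₁ h₁ x₂ h₂ hseg =>
            hw.2 (hFexp.subset h₁) (hFexp.subset h₂) hseg⟩
end

section
/- Let G be a finite bipartite graph and b : V → R nonnegative. An element u of the fractional perfect b-matching polytope P(G,b) is a vertex of P(G,b) if and only if the spanning subgraph of G with edge set {e : u_e > 0} is a forest. -/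
open Finset
open scoped Classical

variable {V E : Type}

lemma reachOn_symm (ends : E → Sym2 V) (D : Set E) : Symmetric (ReachOn ends D) := by
  refine fun x y h => (@Relation.ReflTransGen.symmetric _ (fun a b => ∃ e ∈ D, ends e = s(a, b)) ⟨?_⟩).symm x y h
  rintro a b ⟨e, he, hab⟩
  exact ⟨e, he, by rwa [Sym2.eq_swap]⟩

lemma degIn_eq_sum (ends : E → Sym2 V) (hnl : ∀ (e : E) (a : V), ends e ≠ s(a, a))
    (F : Finset E) (x : V) :
    degIn ends F x = ∑ e ∈ F, if x ∈ ends e then 1 else 0 := by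
  unfold degIn
  exact Finset.sum_congr rfl fun e _ => by rw [if_neg (hnl e x)]

lemma sym2_exists_rep (z : Sym2 V) : ∃ a b : V, z = s(a, b) := by
  induction z using Sym2.ind with
  | _ a b => exact ⟨a, b, rfl⟩

def IsPathOn (ends : E → Sym2 V) (D : Set E) (n : ℕ) (v : Fin (n+1) → V) (e : Fin n → E) : Prop :=
  Function.Injective v ∧ ∀ i : Fin n, e i ∈ D ∧ ends (e i) = s(v i.castSucc, v i.succ)

lemma exists_cycle_of_two_edges [Fintype V] (ends : E → Sym2 V)
    (hnl : ∀ (e : E) (a : V), ends e ≠ s(a, a)) (D : Set E)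
    (e₀ : E) (he₀ : e₀ ∈ D)
    (hdeg : ∀ (x : V) (e : E), e ∈ D → x ∈ ends e → ∃ e' ∈ D, e' ≠ e ∧ x ∈ ends e') :
    ∃ F : Finset E, (∀ e ∈ F, e ∈ D) ∧ IsCycle ends F := by
  obtain ⟨a, b, hab⟩ := sym2_exists_rep (ends e₀)
  have hane : a ≠ b := fun h => hnl e₀ b (by rw [hab, h])
  set P : ℕ → Prop := fun n => 1 ≤ n ∧ ∃ v : Fin (n+1) → V, ∃ e : Fin n → E,
    IsPathOn ends D n v e with hP
  have hP1 : P 1 := by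
    refine ⟨le_refl 1, ![a, b], ![e₀], ?_, ?_⟩
    · intro i j hij
      fin_cases i <;> fin_cases j <;> simp_all <;> exact (hane hij.symm).elim
    · intro i
      fin_cases i
      refine ⟨he₀, ?_⟩
      simpa using hab
  have hcard : ∀ n, P n → n < Fintype.card V := by
    rintro n ⟨-, v, e, hinj, -⟩
    have := Fintype.card_le_of_injective v hinj
    simp only [Fintype.card_fin] at this
    omega
  set N := Nat.findGreatest P (Fintype.card V) with hN
  have hPN : P N := Nat.findGreatest_spec (le_of_lt (hcard 1 hP1)) hP1
  have hmax : ¬ P (N + 1) := fun h =>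
    (Nat.findGreatest_is_greatest (lt_add_one N) (le_of_lt (hcard _ h))) h
  obtain ⟨hN1, v, e, hvinj, hpe⟩ := hPN
  have hNpos : 0 < N := hN1
  set iN : Fin N := ⟨N - 1, by omega⟩ with hiN
  have hsucc : iN.succ = Fin.last N := by
    apply Fin.ext
    simp [hiN, Fin.last]
    omega
  set vl : V := v (Fin.last N) with hvldef
  have hvl : vl ∈ ends (e iN) := by
    rw [(hpe iN).2, hsucc]
    exact Sym2.mem_mk_right _ _
  obtain ⟨f, hfD, hfne, hvlf⟩ := hdeg vl (e iN) (hpe iN).1 hvl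
  obtain ⟨w, hw⟩ := Sym2.mem_iff_exists.mp hvlf
  have hwvl : w ≠ vl := fun h => hnl f vl (by rw [hw, h])
  by_cases hwr : ∃ j : Fin (N+1), v j = w
  · -- w is on the path: extract a cycle
    obtain ⟨j, hj⟩ := hwr
    have hjlast : j ≠ Fin.last N := fun h => hwvl (by rw [← hj, h])
    have hm : j.val < N := by
      have h1 := j.isLt
      rcases Nat.lt_or_ge j.val N with h | h
      · exact h
      · exact absurd (Fin.ext (by simp [Fin.last]; omega) : j = Fin.last N) hjlast
    have heinj : Function.Injective e := by
      intro i i' hii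
      have heq : s(v i.castSucc, v i.succ) = s(v i'.castSucc, v i'.succ) := by
        rw [← (hpe i).2, ← (hpe i').2, hii]
      rcases Sym2.eq_iff.mp heq with ⟨h1, _⟩ | ⟨h1, h2⟩
      · exact Fin.castSucc_injective _ (hvinj h1)
      · have b1 := congrArg Fin.val (hvinj h1)
        have b2 := congrArg Fin.val (hvinj h2)
        simp only [Fin.val_succ, Fin.coe_castSucc] at b1 b2
        exact Fin.ext (by omega)
    have hfnot : ∀ i : Fin N, f ≠ e i := by
      intro i hfe
      have hmem : vl ∈ ends (e i) := hfe ▸ hvlf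
      rw [(hpe i).2, Sym2.mem_iff] at hmem
      rcases hmem with h | h
      · have := congrArg Fin.val (hvinj h)
        simp [Fin.last] at this
        omega
      · have h2 := congrArg Fin.val (hvinj h)
        simp [Fin.last] at h2
        have : i = iN := Fin.ext (by simp [hiN]; omega)
        exact hfne (by rw [hfe, this])
    set I : Finset (Fin N) := univ.filter (fun i => j.val ≤ i.val) with hI
    set F : Finset E := I.image e ∪ {f} with hF
    have hfnotim : f ∉ I.image e := by
      rw [Finset.mem_image]
      rintro ⟨i, -, hie⟩
      exact hfnot i hie.symm
    have hFD : ∀ g ∈ F, g ∈ D := by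
      intro g hg
      rw [hF, Finset.mem_union] at hg
      rcases hg with hg | hg
      · obtain ⟨i, -, rfl⟩ := Finset.mem_image.mp hg
        exact (hpe i).1
      · rw [Finset.mem_singleton] at hg
        exact hg ▸ hfD
    have htouch : ∀ x : V, (∃ g ∈ F, x ∈ ends g) →
        ∃ k : Fin (N+1), j.val ≤ k.val ∧ x = v k := by
      rintro x ⟨g, hgF, hxg⟩
      rw [hF, Finset.mem_union] at hgF
      rcases hgF with hg | hg
      · obtain ⟨i, hiI, rfl⟩ := Finset.mem_image.mp hg
        have hiIj : j.val ≤ i.val := by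
          rw [hI, Finset.mem_filter] at hiI
          exact hiI.2
        rw [(hpe i).2, Sym2.mem_iff] at hxg
        rcases hxg with h | h
        · exact ⟨i.castSucc, by simpa using hiIj, h⟩
        · exact ⟨i.succ, by simp; omega, h⟩
      · rw [Finset.mem_singleton] at hg
        subst hg
        rw [hw, Sym2.mem_iff] at hxg
        rcases hxg with h | h
        · exact ⟨Fin.last N, by simp [Fin.last]; omega, h⟩
        · exact ⟨j, le_refl _, h ▸ hj.symm⟩
      -- done
    have hdegsum : ∀ x : V, degIn ends F x =
        (∑ i ∈ I, if x ∈ ends (e i) then 1 else 0) + (if x ∈ ends f then 1 else 0) := by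
      intro x
      rw [degIn_eq_sum ends hnl, hF,
        Finset.sum_union (Finset.disjoint_singleton_right.mpr hfnotim),
        Finset.sum_image (fun i _ i' _ h => heinj h), Finset.sum_singleton]
    have hdegF : ∀ x : V, degIn ends F x = 0 ∨ degIn ends F x = 2 := by
      intro x
      rw [hdegsum x]
      by_cases hx : ∃ k : Fin (N+1), x = v k
      · obtain ⟨k, rfl⟩ := hx
        have hsum1 : ∀ i ∈ I, (if v k ∈ ends (e i) then (1:ℕ) else 0) =
            (if i.val = k.val then 1 else 0) + (if i.val + 1 = k.val then 1 else 0) := by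
          intro i hiI
          rw [(hpe i).2]
          have hc : v k = v i.castSucc ↔ k.val = i.val := by
            constructor
            · intro h; simpa using congrArg Fin.val (hvinj h)
            · intro h; exact congrArg v (Fin.ext (by simpa using h))
          have hs : v k = v i.succ ↔ k.val = i.val + 1 := by
            constructor
            · intro h; simpa using congrArg Fin.val (hvinj h)
            · intro h; exact congrArg v (Fin.ext (by simpa using h))
          have hmem : v k ∈ s(v i.castSucc, v i.succ) ↔ (k.val = i.val ∨ k.val = i.val + 1) := by
            rw [Sym2.mem_iff]; exact or_congr hc hs
          rw [if_congr hmem rfl rfl]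
          split_ifs <;> omega
        rw [Finset.sum_congr rfl hsum1, Finset.sum_add_distrib]
        have hterm1 : (∑ i ∈ I, if i.val = k.val then (1:ℕ) else 0) =
            if j.val ≤ k.val ∧ k.val < N then 1 else 0 := by
          by_cases hk : j.val ≤ k.val ∧ k.val < N
          · rw [if_pos hk, Finset.sum_eq_single_of_mem (⟨k.val, hk.2⟩ : Fin N)
              (by rw [hI, Finset.mem_filter]; exact ⟨Finset.mem_univ _, hk.1⟩)
              (fun i _ hine => if_neg (fun h => hine (Fin.ext h)))]
            exact if_pos rfl
          · rw [if_neg hk]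
            apply Finset.sum_eq_zero
            intro i hiI
            rw [hI, Finset.mem_filter] at hiI
            exact if_neg (fun h => hk ⟨by omega, by have := i.isLt; omega⟩)
        have hterm2 : (∑ i ∈ I, if i.val + 1 = k.val then (1:ℕ) else 0) =
            if j.val < k.val then 1 else 0 := by
          by_cases hk : j.val < k.val
          · have hkN : k.val ≤ N := by have := k.isLt; omega
            rw [if_pos hk, Finset.sum_eq_single_of_mem (⟨k.val - 1, by omega⟩ : Fin N)
              (by rw [hI, Finset.mem_filter]
                  exact ⟨Finset.mem_univ _, show j.val ≤ k.val - 1 by omega⟩)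
              (fun i _ hine => if_neg (fun h => hine (Fin.ext (show i.val = k.val - 1 by omega))))]
            exact if_pos (show k.val - 1 + 1 = k.val by omega)
          · rw [if_neg hk]
            apply Finset.sum_eq_zero
            intro i hiI
            rw [hI, Finset.mem_filter] at hiI
            exact if_neg (by omega)
        have hterm3 : (if v k ∈ ends f then (1:ℕ) else 0) =
            if k.val = N ∨ k.val = j.val then 1 else 0 := by
          rw [hw]
          have h1 : v k = vl ↔ k.val = N := by
            constructor
            · intro h; simpa [Fin.last] using congrArg Fin.val (hvinj h)
            · intro h; exact congrArg v (Fin.ext (by simpa [Fin.last] using h))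
          have h2 : v k = w ↔ k.val = j.val := by
            rw [← hj]
            constructor
            · intro h; simpa using congrArg Fin.val (hvinj h)
            · intro h; exact congrArg v (Fin.ext (by simpa using h))
          have hmem : v k ∈ s(vl, w) ↔ (k.val = N ∨ k.val = j.val) := by
            rw [Sym2.mem_iff]; exact or_congr h1 h2
          rw [if_congr hmem rfl rfl]
        rw [hterm1, hterm2, hterm3]
        have hkN : k.val ≤ N := by have := k.isLt; omega
        split_ifs <;> omega
      · left
        push_neg at hx
        have z1 : (∑ i ∈ I, if x ∈ ends (e i) then (1:ℕ) else 0) = 0 := by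
          apply Finset.sum_eq_zero
          intro i _
          rw [(hpe i).2]
          exact if_neg (fun hmem => by
            rcases Sym2.mem_iff.mp hmem with h | h
            · exact hx _ h
            · exact hx _ h)
        rw [z1, if_neg, add_zero]
        rw [hw]
        intro hmem
        rcases Sym2.mem_iff.mp hmem with h | h
        · exact hx _ h
        · exact hx j (h.trans hj.symm)
    have hreach : ∀ k : ℕ, j.val ≤ k → ∀ hk2 : k ≤ N,
        ReachOn ends (↑F) (v j) (v ⟨k, by omega⟩) := by
      intro k hk hk2
      induction k, hk using Nat.le_induction with
      | base =>
        have : (⟨j.val, by omega⟩ : Fin (N+1)) = j := Fin.ext rfl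
        rw [this]
        exact Relation.ReflTransGen.refl
      | succ k hk ih =>
        have hkN : k < N := by omega
        have hstep : ReachOn ends (↑F) (v ⟨k, by omega⟩) (v ⟨k+1, by omega⟩) := by
          apply Relation.ReflTransGen.single
          refine ⟨e ⟨k, hkN⟩, ?_, ?_⟩
          · have : e ⟨k, hkN⟩ ∈ F := by
              rw [hF, Finset.mem_union]
              left
              exact Finset.mem_image_of_mem e (by rw [hI, Finset.mem_filter]; exact ⟨Finset.mem_univ _, hk⟩)
            exact_mod_cast this
          · have := (hpe ⟨k, hkN⟩).2
            convert this using 3 <;> apply Fin.ext <;> simp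
        exact (ih (by omega)).trans hstep
    refine ⟨F, hFD, ⟨f, by rw [hF]; exact Finset.mem_union_right _ (Finset.mem_singleton_self f)⟩,
      hdegF, ?_⟩
    intro x y hx hy
    obtain ⟨kx, hkx1, rfl⟩ := htouch x hx
    obtain ⟨ky, hky1, rfl⟩ := htouch y hy
    have hx' := hreach kx.val hkx1 (by have := kx.isLt; omega)
    have hy' := hreach ky.val hky1 (by have := ky.isLt; omega)
    rw [show (⟨kx.val, _⟩ : Fin (N+1)) = kx from Fin.ext rfl] at hx'
    rw [show (⟨ky.val, _⟩ : Fin (N+1)) = ky from Fin.ext rfl] at hy'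
    exact (reachOn_symm ends _ hx').trans hy'
  · -- extend the path: contradiction with maximality
    exfalso
    apply hmax
    refine ⟨by omega, Fin.snoc v w, Fin.snoc e f, ?_, ?_⟩
    · intro i i' hii
      rcases Fin.eq_castSucc_or_eq_last i with ⟨i1, rfl⟩ | rfl <;>
        rcases Fin.eq_castSucc_or_eq_last i' with ⟨i2, rfl⟩ | rfl
      · rw [Fin.snoc_castSucc, Fin.snoc_castSucc] at hii
        exact congrArg Fin.castSucc (hvinj hii)
      · rw [Fin.snoc_castSucc, Fin.snoc_last] at hii
        exact absurd ⟨i1, hii⟩ hwr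
      · rw [Fin.snoc_castSucc, Fin.snoc_last] at hii
        exact absurd ⟨i2, hii.symm⟩ hwr
      · rfl
    · intro i
      rcases Fin.eq_castSucc_or_eq_last i with ⟨i1, rfl⟩ | rfl
      · rw [Fin.snoc_castSucc]
        refine ⟨(hpe i1).1, ?_⟩
        rw [Fin.succ_castSucc, Fin.snoc_castSucc, Fin.snoc_castSucc]
        exact (hpe i1).2
      · rw [Fin.snoc_last]
        refine ⟨hfD, ?_⟩
        rw [Fin.succ_last, Fin.snoc_last, Fin.snoc_castSucc]
        exact hw

lemma exists_kernel_on_cycle [Fintype V] [Fintype E] (ends : E → Sym2 V)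
    (fb : V → Bool) (hfb : ∀ (e : E) (a c : V), ends e = s(a, c) → fb a ≠ fb c)
    (hnl : ∀ (e : E) (a : V), ends e ≠ s(a, a))
    (F : Finset E) (hcyc : IsCycle ends F) :
    ∃ w : E → ℝ, w ≠ 0 ∧ (∀ e, e ∉ F → w e = 0) ∧
      ∀ x : V, ∑ e : E, (if x ∈ ends e then w e else 0) = 0 := by
  set S : Finset V := univ.filter (fun x : V => ∃ e ∈ F, x ∈ ends e) with hS
  have hSend : ∀ e ∈ F, ∀ x, x ∈ ends e → x ∈ S := by
    intro e he x hx
    rw [hS, Finset.mem_filter]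
    exact ⟨Finset.mem_univ _, e, he, hx⟩
  have hdeg2 : ∀ x ∈ S, degIn ends F x = 2 := by
    intro x hx
    rcases hcyc.2.1 x with h0 | h2
    · exfalso
      rw [hS, Finset.mem_filter] at hx
      obtain ⟨-, e, he, hxe⟩ := hx
      rw [degIn_eq_sum ends hnl] at h0
      have := (Finset.sum_eq_zero_iff.mp h0) e he
      rw [if_pos hxe] at this
      exact one_ne_zero this
    · exact h2
  have hcard : S.card = F.card := by
    have h1 : ∑ x : V, degIn ends F x = 2 * F.card := by
      unfold degIn
      rw [Finset.sum_comm]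
      have : ∀ e ∈ F, (∑ x : V, if ends e = s(x, x) then 2 else if x ∈ ends e then 1 else 0) = 2 := by
        intro e _
        obtain ⟨a, c, hac⟩ := sym2_exists_rep (ends e)
        have hane : a ≠ c := fun h => hnl e c (by rw [hac, h])
        have : ∀ x : V, (if ends e = s(x, x) then (2:ℕ) else if x ∈ ends e then 1 else 0)
            = if x ∈ ends e then 1 else 0 := fun x => if_neg (hnl e x)
        rw [Finset.sum_congr rfl (fun x _ => this x), Finset.sum_boole]
        have : (univ.filter (fun x => x ∈ ends e)) = {a, c} := by
          ext x
          simp [hac, Sym2.mem_iff]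
        rw [this, Finset.card_insert_of_notMem (by simpa using hane), Finset.card_singleton]
        rfl
      rw [Finset.sum_congr rfl this, Finset.sum_const, smul_eq_mul, mul_comm]
    have h2 : ∑ x : V, degIn ends F x = 2 * S.card := by
      rw [← Finset.sum_subset (Finset.subset_univ S)]
      · rw [Finset.sum_congr rfl (fun x hx => hdeg2 x hx), Finset.sum_const, smul_eq_mul,
          mul_comm]
      · intro x _ hxS
        rw [degIn_eq_sum ends hnl]
        apply Finset.sum_eq_zero
        intro e he
        exact if_neg (fun hx => hxS (hSend e he x hx))
    omega
  obtain ⟨e₁, he₁⟩ := hcyc.1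
  obtain ⟨a₁, c₁, hac₁⟩ := sym2_exists_rep (ends e₁)
  have hv₀ : a₁ ∈ S := hSend e₁ he₁ a₁ (by rw [hac₁]; exact Sym2.mem_mk_left _ _)
  set v₀ := a₁
  set B : Matrix {x // x ∈ S.erase v₀} {e // e ∈ F} ℝ :=
    fun p q => if (p : V) ∈ ends (q : E) then 1 else 0 with hB
  set T := Matrix.mulVecLin B with hT
  have hFpos : 0 < F.card := Finset.card_pos.mpr hcyc.1
  have hnotinj : ¬ Function.Injective T := by
    intro hinj
    have h1 := LinearMap.finrank_le_finrank_of_injective hinj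
    rw [Module.finrank_fintype_fun_eq_card, Module.finrank_fintype_fun_eq_card,
      Fintype.card_coe, Fintype.card_coe, Finset.card_erase_of_mem hv₀, hcard] at h1
    omega
  have hker : ∃ z : {e // e ∈ F} → ℝ, z ≠ 0 ∧ T z = 0 := by
    rw [← LinearMap.ker_eq_bot] at hnotinj
    obtain ⟨z, hz1, hz2⟩ := Submodule.ne_bot_iff _ |>.mp hnotinj
    exact ⟨z, hz2, hz1⟩
  obtain ⟨z, hzne, hzker⟩ := hker
  set w : E → ℝ := fun g => if h : g ∈ F then z ⟨g, h⟩ else 0 with hwdef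
  have hwF : ∀ e, e ∉ F → w e = 0 := fun e he => dif_neg he
  have hwz : ∀ q : {e // e ∈ F}, w q = z q := by
    intro q
    rw [hwdef]
    simp
  have hwne : w ≠ 0 := by
    intro h
    apply hzne
    funext q
    have := congrFun h q.val
    rwa [hwz q] at this
  -- the restricted row sums
  set r : V → ℝ := fun x => ∑ e ∈ F, (if x ∈ ends e then w e else 0) with hr
  have hrow : ∀ p, (hp : p ∈ S.erase v₀) → r p = 0 := by
    intro p hp
    have h0 := congrFun hzker ⟨p, hp⟩
    rw [hT] at h0
    have : (Matrix.mulVecLin B) z ⟨p, hp⟩ = ∑ q ∈ F.attach, (if p ∈ ends q.val then w q.val else 0) := by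
      rw [Matrix.mulVecLin_apply, Matrix.mulVec, dotProduct, Finset.univ_eq_attach]
      apply Finset.sum_congr rfl
      intro q _
      rw [hB, hwz q]
      simp [ite_mul]
    rw [this] at h0
    simp only [hr]
    rw [← Finset.sum_attach F (fun e => if p ∈ ends e then w e else 0)]
    exact h0
  have hrnotS : ∀ p, p ∉ S → r p = 0 := by
    intro p hp
    simp only [hr]
    apply Finset.sum_eq_zero
    intro e he
    exact if_neg (fun hx => hp (hSend e he p hx))
  set g : V → ℝ := fun x => if fb x then 1 else -1 with hg
  have hsigned : ∑ p ∈ S, g p * r p = 0 := by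
    simp only [hr]
    simp only [Finset.mul_sum]
    rw [Finset.sum_comm]
    apply Finset.sum_eq_zero
    intro e he
    obtain ⟨a, c, hac⟩ := sym2_exists_rep (ends e)
    have hane : a ≠ c := fun h => hnl e c (by rw [hac, h])
    have haS : a ∈ S := hSend e he a (by rw [hac]; exact Sym2.mem_mk_left _ _)
    have hcS : c ∈ S := hSend e he c (by rw [hac]; exact Sym2.mem_mk_right _ _)
    have : ∀ p ∈ S, g p * (if p ∈ ends e then w e else 0) =
        (if p ∈ ends e then g p else 0) * w e := by
      intro p _
      split_ifs <;> ring
    rw [Finset.sum_congr rfl this, ← Finset.sum_mul]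
    have hfilter : S.filter (fun p => p ∈ ends e) = {a, c} := by
      ext p
      simp only [Finset.mem_filter, hac, Sym2.mem_iff, Finset.mem_insert, Finset.mem_singleton]
      constructor
      · rintro ⟨-, h⟩; exact h
      · rintro (rfl | rfl)
        · exact ⟨haS, Or.inl rfl⟩
        · exact ⟨hcS, Or.inr rfl⟩
    rw [← Finset.sum_filter, hfilter, Finset.sum_pair hane]
    have := hfb e a c hac
    simp only [hg]
    rcases Bool.eq_false_or_eq_true (fb a) with h1 | h1 <;>
      rcases Bool.eq_false_or_eq_true (fb c) with h2 | h2 <;>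
      simp_all
  have hrv₀ : r v₀ = 0 := by
    have hsum : ∑ p ∈ S, g p * r p = g v₀ * r v₀ + ∑ p ∈ S.erase v₀, g p * r p :=
      (Finset.add_sum_erase S (fun p => g p * r p) hv₀).symm
    rw [hsigned] at hsum
    have : ∑ p ∈ S.erase v₀, g p * r p = 0 :=
      Finset.sum_eq_zero (fun p hp => by rw [hrow p hp, mul_zero])
    rw [this, add_zero] at hsum
    have hgne : g v₀ ≠ 0 := by
      simp only [hg]
      split_ifs <;> norm_num
    have := hsum.symm
    rcases mul_eq_zero.mp this with h | h
    · exact absurd h hgne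
    · exact h
  have hrall : ∀ x : V, r x = 0 := by
    intro x
    by_cases hxS : x ∈ S
    · by_cases hxv : x = v₀
      · rw [hxv]; exact hrv₀
      · exact hrow x (Finset.mem_erase.mpr ⟨hxv, hxS⟩)
    · exact hrnotS x hxS
  refine ⟨w, hwne, hwF, ?_⟩
  intro x
  rw [← Finset.sum_subset (Finset.subset_univ F)]
  · exact hrall x
  · intro e _ heF
    rw [hwF e heF]
    simp


theorem vertex_PGb_iff_forest [Fintype V] [Fintype E] (ends : E → Sym2 V) (b : V → ℝ)
    (hbip : ∃ f : V → Bool, ∀ (e : E) (u w : V), ends e = s(u, w) → f u ≠ f w)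
    (hb : ∀ v, 0 ≤ b v) (u : E → ℝ) (hu : u ∈ PGb ends b) :
    u ∈ Set.extremePoints ℝ (PGb ends b) ↔
      ∀ F : Finset E, (∀ e ∈ F, 0 < u e) → ¬ IsCycle ends F := by
  obtain ⟨fb, hfb⟩ := hbip
  have hnl : ∀ (e : E) (a : V), ends e ≠ s(a, a) := fun e a h => (hfb e a a h) rfl
  rw [mem_extremePoints]
  constructor
  · rintro ⟨-, hext⟩ F hFpos hFcyc
    obtain ⟨w, hwne, hwF, hwker⟩ := exists_kernel_on_cycle ends fb hfb hnl F hFcyc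
    have hFne : F.Nonempty := hFcyc.1
    set c : ℝ := F.inf' hFne (fun e => u e / (|w e| + 1)) with hc
    have hcpos : 0 < c := by
      rw [hc, Finset.lt_inf'_iff]
      intro e he
      exact div_pos (hFpos e he) (by positivity)
    have hcle : ∀ e ∈ F, c * |w e| < u e := by
      intro e he
      have h1 : c ≤ u e / (|w e| + 1) := Finset.inf'_le _ he
      have h2 : c * (|w e| + 1) ≤ u e := by
        rw [← le_div_iff₀ (by positivity)]
        exact h1
      nlinarith [abs_nonneg (w e)]
    have hmemaux : ∀ s : ℝ, |s| = 1 → (u + (s * c) • w) ∈ PGb ends b := by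
      intro s hs
      constructor
      · intro e
        by_cases he : e ∈ F
        · have h1 := hcle e he
          have h2 : |s * c * w e| ≤ c * |w e| := by
            rw [abs_mul, abs_mul, hs, one_mul, abs_of_pos hcpos]
          have habs := abs_le.mp h2
          simp only [Pi.add_apply, Pi.smul_apply, smul_eq_mul]
          nlinarith
        · simp only [Pi.add_apply, Pi.smul_apply, smul_eq_mul, hwF e he, mul_zero, add_zero]
          exact hu.1 e
      · intro v
        have hsplit : ∀ e : E, (if v ∈ ends e then (u + (s * c) • w) e else 0) =
            (if v ∈ ends e then u e else 0) + s * c * (if v ∈ ends e then w e else 0) := by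
          intro e
          simp only [Pi.add_apply, Pi.smul_apply, smul_eq_mul]
          split_ifs <;> ring
        rw [Finset.sum_congr rfl (fun e _ => hsplit e), Finset.sum_add_distrib,
          ← Finset.mul_sum, hu.2 v, hwker v, mul_zero, add_zero]
    have hxP := hmemaux 1 (by norm_num)
    have hyP := hmemaux (-1) (by norm_num)
    have humem : u ∈ openSegment ℝ (u + (1 * c) • w) (u + ((-1) * c) • w) := by
      refine ⟨1/2, 1/2, by norm_num, by norm_num, by norm_num, ?_⟩
      funext e
      simp only [Pi.add_apply, Pi.smul_apply, smul_eq_mul]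
      ring
    have hxu := (hext _ hxP _ hyP humem).1
    apply hwne
    funext e
    have := congrFun hxu e
    simp only [Pi.add_apply, Pi.smul_apply, smul_eq_mul, one_mul] at this
    have : c * w e = 0 := by linarith [this]
    rcases mul_eq_zero.mp this with h | h
    · exact absurd h (ne_of_gt hcpos)
    · exact h
  · intro hforest
    refine ⟨hu, ?_⟩
    intro x hx y hy hseg
    by_contra hcon
    obtain ⟨α, β, hα, hβ, hαβ, hsum⟩ := hseg
    have hxyne : x ≠ y := by
      rintro rfl
      apply hcon
      have hxu : x = u := by
        funext e
        have := congrFun hsum e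
        simp only [Pi.add_apply, Pi.smul_apply, smul_eq_mul] at this
        have h2 : (α + β) * x e = u e := by linear_combination this
        rw [hαβ, one_mul] at h2
        exact h2
      exact ⟨hxu, hxu⟩
    set z : E → ℝ := fun e => x e - y e with hz
    have hzne : ∃ e, z e ≠ 0 := by
      by_contra h
      push_neg at h
      exact hxyne (funext fun e => by have := h e; simp only [hz] at this; linarith)
    have hzker : ∀ v : V, ∑ e : E, (if v ∈ ends e then z e else 0) = 0 := by
      intro v
      have h1 := hx.2 v
      have h2 := hy.2 v
      have : ∀ e : E, (if v ∈ ends e then z e else 0) =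
          (if v ∈ ends e then x e else 0) - (if v ∈ ends e then y e else 0) := by
        intro e
        simp only [hz]
        split_ifs <;> ring
      rw [Finset.sum_congr rfl (fun e _ => this e), Finset.sum_sub_distrib, h1, h2, sub_self]
    have hsupp : ∀ e : E, z e ≠ 0 → 0 < u e := by
      intro e hze
      rcases lt_or_eq_of_le (hu.1 e) with h | h
      · exact h
      · exfalso
        have hue := congrFun hsum e
        simp only [Pi.add_apply, Pi.smul_apply, smul_eq_mul] at hue
        have hx0 := hx.1 e
        have hy0 := hy.1 e
        have hxe : x e = 0 := by nlinarith
        have hye : y e = 0 := by nlinarith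
        apply hze
        simp only [hz, hxe, hye, sub_zero]
    set D : Set E := {e | z e ≠ 0} with hD
    obtain ⟨e₀, he₀⟩ := hzne
    have hdeg : ∀ (xv : V) (e : E), e ∈ D → xv ∈ ends e →
        ∃ e' ∈ D, e' ≠ e ∧ xv ∈ ends e' := by
      intro xv e heD hxe
      by_contra hno
      push_neg at hno
      have hsingle : ∑ e' : E, (if xv ∈ ends e' then z e' else 0) = z e := by
        rw [Finset.sum_eq_single e]
        · exact if_pos hxe
        · intro e' _ hne
          by_cases hmem : xv ∈ ends e'
          · rw [if_pos hmem]
            by_contra hz0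
            exact (hno e' hz0 hne) hmem
          · exact if_neg hmem
        · intro h
          exact absurd (Finset.mem_univ e) h
      rw [hzker xv] at hsingle
      exact heD hsingle.symm
    obtain ⟨F, hFD, hFcyc⟩ := exists_cycle_of_two_edges ends hnl D e₀ he₀ hdeg
    exact hforest F (fun e he => hsupp e (hFD e he)) hFcyc
end

section
/- Let G be a finite bipartite graph and b : V → R nonnegative. The fractional perfect b-matching polytope P(G,b) is nonempty if and only if for every vertex cover C of G, the sum of b_v over v ∈ C is at least the sum of b_v over v ∉ C. -/
open Finset
open scoped Classical

variable {V E : Type}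

/-- surplus of a vertex set -/
noncomputable def sfn [Fintype V] [DecidableEq V] (b : V → ℝ) (C : Finset V) : ℝ :=
  ∑ v ∈ C, b v - ∑ v ∈ Cᶜ, b v

lemma sfn_eq [Fintype V] [DecidableEq V] (b : V → ℝ) (A : Finset V) :
    sfn b A = 2 * ∑ v ∈ A, b v - ∑ v, b v := by
  have := Finset.sum_add_sum_compl A b
  rw [sfn]; linarith

lemma sfn_insert [Fintype V] [DecidableEq V] (b : V → ℝ) (C : Finset V) (z : V) (hz : z ∉ C) :
    sfn b (insert z C) = sfn b C + 2 * b z := by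
  have h1 : ∑ v ∈ insert z C, b v = b z + ∑ v ∈ C, b v := Finset.sum_insert hz
  have hzc : z ∈ Cᶜ := Finset.mem_compl.mpr hz
  have h2 : ∑ v ∈ (insert z C)ᶜ, b v = ∑ v ∈ Cᶜ, b v - b z := by
    rw [Finset.compl_insert]
    have := Finset.add_sum_erase Cᶜ b hzc
    linarith
  rw [sfn, sfn, h1, h2]; ring

lemma exists_matching_aux [Fintype V] [DecidableEq V] [Fintype E] (ends : E → Sym2 V)
    (f : V → Bool) (hf : ∀ (e : E) (u w : V), ends e = s(u, w) → f u ≠ f w)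
    (F : Finset E) :
    ∀ b : V → ℝ, (∀ v, 0 ≤ b v) →
    (∀ C : Finset V, (∀ e ∈ F, ∃ v ∈ C, v ∈ ends e) → ∑ v ∈ Cᶜ, b v ≤ ∑ v ∈ C, b v) →
    ∃ x : E → ℝ, (∀ e, 0 ≤ x e) ∧ (∀ e, e ∉ F → x e = 0) ∧
      ∀ v : V, ∑ e : E, (if v ∈ ends e then x e else 0) = b v := by
  -- normalized endpoints
  have hends : ∀ e' : E, ∃ p q : V, ends e' = s(p, q) ∧ f p = true ∧ f q = false := by
    intro e'
    obtain ⟨⟨p, q⟩, h⟩ := Quot.exists_rep (ends e')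
    have hpq : ends e' = s(p, q) := h.symm
    have hne := hf e' p q hpq
    by_cases hp : f p = true
    · refine ⟨p, q, hpq, hp, ?_⟩
      cases hq : f q
      · rfl
      · rw [hp, hq] at hne; exact absurd rfl hne
    · have hp' : f p = false := by cases h2 : f p; rfl; exact absurd h2 hp
      have hq : f q = true := by
        cases h2 : f q
        · rw [hp', h2] at hne; exact absurd rfl hne
        · rfl
      exact ⟨q, p, by rw [hpq, Sym2.eq_swap], hq, hp'⟩
  induction F using Finset.induction_on with
  | empty =>
    intro b hb hcov
    have h0 : ∑ v, b v ≤ 0 := by simpa using hcov ∅ (by simp)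
    have hz : ∀ v, b v = 0 := by
      intro v
      have h1 : ∑ v, b v = 0 := le_antisymm h0 (Finset.sum_nonneg fun v _ => hb v)
      exact (Finset.sum_eq_zero_iff_of_nonneg (fun v _ => hb v)).mp h1 v (mem_univ v)
    exact ⟨0, fun e => le_refl 0, fun e _ => rfl, fun v => by simp [hz v]⟩
  | @insert e s he ih =>
    intro b hb hcov
    obtain ⟨u, w, huw, hfu, hfw⟩ := hends e
    have hune : u ≠ w := fun h => by rw [h, hfw] at hfu; exact Bool.noConfusion hfu
    have mem_e : ∀ v, v ∈ ends e ↔ v = u ∨ v = w := fun v => by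
      rw [huw]; exact Sym2.mem_iff
    have hK0 : ∀ C : Finset V, (∀ e' ∈ insert e s, ∃ v ∈ C, v ∈ ends e') → 0 ≤ sfn b C := by
      intro C hC
      have := hcov C hC
      rw [sfn]; linarith
    have hext : ∀ C : Finset V, (∀ e' ∈ s, ∃ v ∈ C, v ∈ ends e') → (u ∈ C ∨ w ∈ C) →
        (∀ e' ∈ insert e s, ∃ v ∈ C, v ∈ ends e') := by
      intro C hC hu e' he'
      rcases Finset.mem_insert.mp he' with rfl | h
      · rcases hu with h | h
        · exact ⟨u, h, (mem_e u).mpr (Or.inl rfl)⟩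
        · exact ⟨w, h, (mem_e w).mpr (Or.inr rfl)⟩
      · exact hC e' h
    set P : Finset (Finset V) :=
      univ.filter (fun C => (∀ e' ∈ s, ∃ v ∈ C, v ∈ ends e') ∧ u ∈ C ∧ w ∈ C) with hP
    have hPmem : ∀ C, C ∈ P ↔ ((∀ e' ∈ s, ∃ v ∈ C, v ∈ ends e') ∧ u ∈ C ∧ w ∈ C) := by
      intro C; simp [hP]
    have hPuniv : (univ : Finset V) ∈ P := by
      rw [hPmem]
      refine ⟨fun e' _ => ?_, mem_univ u, mem_univ w⟩
      obtain ⟨p, q, hpq, _, _⟩ := hends e'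
      exact ⟨p, mem_univ p, by rw [hpq]; exact Sym2.mem_mk_left p q⟩
    have hPne : (P.image (fun C => sfn b C / 2)).Nonempty := ⟨_, mem_image_of_mem _ hPuniv⟩
    set m := (P.image (fun C => sfn b C / 2)).min' hPne with hm
    set α := min (b u) (min (b w) m) with hα
    have hPpos : ∀ C ∈ P, 0 ≤ sfn b C := by
      intro C hC
      rw [hPmem] at hC
      exact hK0 C (hext C hC.1 (Or.inl hC.2.1))
    have hα0 : 0 ≤ α := by
      refine le_min (hb u) (le_min (hb w) ?_)
      apply Finset.le_min'
      intro y hy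
      obtain ⟨C, hC, rfl⟩ := Finset.mem_image.mp hy
      have := hPpos C hC
      linarith
    have hαu : α ≤ b u := min_le_left _ _
    have hαw : α ≤ b w := le_trans (min_le_right _ _) (min_le_left _ _)
    have hαP : ∀ C ∈ P, α ≤ sfn b C / 2 := by
      intro C hC
      exact le_trans (le_trans (min_le_right _ _) (min_le_right _ _))
        (Finset.min'_le _ _ (mem_image_of_mem _ hC))
    -- the lattice lemma
    have hlat : ∀ C : Finset V, (∀ e' ∈ s, ∃ v ∈ C, v ∈ ends e') → u ∉ C → w ∉ C →
        ∀ D ∈ P, 0 ≤ sfn b C + sfn b D := by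
      intro C hC hu hw D hD
      rw [hPmem] at hD
      obtain ⟨hDcov, hDu, hDw⟩ := hD
      set A1 : Finset V := (C ∪ D).filter (fun v => f v = true) ∪
        (C ∩ D).filter (fun v => f v = false) with hA1
      set A2 : Finset V := (C ∩ D).filter (fun v => f v = true) ∪
        (C ∪ D).filter (fun v => f v = false) with hA2
      have hmem1 : ∀ v, v ∈ A1 ↔ ((v ∈ C ∪ D ∧ f v = true) ∨ (v ∈ C ∩ D ∧ f v = false)) := by
        intro v; simp [hA1, Finset.mem_union, Finset.mem_filter]
      have hmem2 : ∀ v, v ∈ A2 ↔ ((v ∈ C ∩ D ∧ f v = true) ∨ (v ∈ C ∪ D ∧ f v = false)) := by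
        intro v; simp [hA2, Finset.mem_union, Finset.mem_filter]
      have hcov1 : ∀ e' ∈ insert e s, ∃ v ∈ A1, v ∈ ends e' := by
        intro e' he'
        rcases Finset.mem_insert.mp he' with rfl | h
        · exact ⟨u, (hmem1 u).mpr (Or.inl ⟨Finset.mem_union.mpr (Or.inr hDu), hfu⟩),
            (mem_e u).mpr (Or.inl rfl)⟩
        · obtain ⟨p, q, hpq, hfp, hfq⟩ := hends e'
          have hpmem : p ∈ ends e' := by rw [hpq]; exact Sym2.mem_mk_left p q
          have hqmem : q ∈ ends e' := by rw [hpq]; exact Sym2.mem_mk_right p q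
          have hcovC : p ∈ C ∨ q ∈ C := by
            obtain ⟨vC, hvC, hvCe⟩ := hC e' h
            rw [hpq, Sym2.mem_iff] at hvCe
            rcases hvCe with rfl | rfl
            · exact Or.inl hvC
            · exact Or.inr hvC
          have hcovD : p ∈ D ∨ q ∈ D := by
            obtain ⟨vD, hvD, hvDe⟩ := hDcov e' h
            rw [hpq, Sym2.mem_iff] at hvDe
            rcases hvDe with rfl | rfl
            · exact Or.inl hvD
            · exact Or.inr hvD
          by_cases hq : q ∈ C ∧ q ∈ D
          · exact ⟨q, (hmem1 q).mpr (Or.inr ⟨Finset.mem_inter.mpr hq, hfq⟩), hqmem⟩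
          · have hp : p ∈ C ∪ D := by
              rcases not_and_or.mp hq with h' | h'
              · exact Finset.mem_union.mpr (Or.inl (hcovC.resolve_right h'))
              · exact Finset.mem_union.mpr (Or.inr (hcovD.resolve_right h'))
            exact ⟨p, (hmem1 p).mpr (Or.inl ⟨hp, hfp⟩), hpmem⟩
      have hcov2 : ∀ e' ∈ insert e s, ∃ v ∈ A2, v ∈ ends e' := by
        intro e' he'
        rcases Finset.mem_insert.mp he' with rfl | h
        · exact ⟨w, (hmem2 w).mpr (Or.inr ⟨Finset.mem_union.mpr (Or.inr hDw), hfw⟩),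
            (mem_e w).mpr (Or.inr rfl)⟩
        · obtain ⟨p, q, hpq, hfp, hfq⟩ := hends e'
          have hpmem : p ∈ ends e' := by rw [hpq]; exact Sym2.mem_mk_left p q
          have hqmem : q ∈ ends e' := by rw [hpq]; exact Sym2.mem_mk_right p q
          have hcovC : p ∈ C ∨ q ∈ C := by
            obtain ⟨vC, hvC, hvCe⟩ := hC e' h
            rw [hpq, Sym2.mem_iff] at hvCe
            rcases hvCe with rfl | rfl
            · exact Or.inl hvC
            · exact Or.inr hvC
          have hcovD : p ∈ D ∨ q ∈ D := by
            obtain ⟨vD, hvD, hvDe⟩ := hDcov e' h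
            rw [hpq, Sym2.mem_iff] at hvDe
            rcases hvDe with rfl | rfl
            · exact Or.inl hvD
            · exact Or.inr hvD
          by_cases hp : p ∈ C ∧ p ∈ D
          · exact ⟨p, (hmem2 p).mpr (Or.inl ⟨Finset.mem_inter.mpr hp, hfp⟩), hpmem⟩
          · have hq : q ∈ C ∪ D := by
              rcases not_and_or.mp hp with h' | h'
              · exact Finset.mem_union.mpr (Or.inl (hcovC.resolve_left h'))
              · exact Finset.mem_union.mpr (Or.inr (hcovD.resolve_left h'))
            exact ⟨q, (hmem2 q).mpr (Or.inr ⟨hq, hfq⟩), hqmem⟩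
      have hsum : ∑ v ∈ A1, b v + ∑ v ∈ A2, b v = ∑ v ∈ C, b v + ∑ v ∈ D, b v := by
        have key : ∀ A : Finset V, ∑ v ∈ A, b v = ∑ v : V, if v ∈ A then b v else 0 := by
          intro A
          rw [Finset.sum_ite_mem, Finset.univ_inter]
        rw [key A1, key A2, key C, key D, ← Finset.sum_add_distrib, ← Finset.sum_add_distrib]
        apply Finset.sum_congr rfl
        intro v _
        by_cases hfv : f v = true
        · have hfv' : ¬ (f v = false) := by simp [hfv]
          by_cases hvC : v ∈ C <;> by_cases hvD : v ∈ D <;>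
            simp [hmem1, hmem2, hfv, hfv', hvC, hvD, Finset.mem_union, Finset.mem_inter]
        · have hfv2 : f v = false := by cases h2 : f v; rfl; exact absurd h2 hfv
          by_cases hvC : v ∈ C <;> by_cases hvD : v ∈ D <;>
            simp [hmem1, hmem2, hfv, hfv2, hvC, hvD, Finset.mem_union, Finset.mem_inter]
      have h1 := hK0 A1 hcov1
      have h2 := hK0 A2 hcov2
      rw [sfn_eq] at h1 h2
      rw [sfn_eq, sfn_eq]
      linarith
    -- lower bound
    have hlow : ∀ C : Finset V, (∀ e' ∈ s, ∃ v ∈ C, v ∈ ends e') → u ∉ C → w ∉ C →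
        0 ≤ sfn b C + 2 * α := by
      intro C hC hu hw
      have hu' : 0 ≤ sfn b C + 2 * b u := by
        have hc := hK0 (insert u C) (hext _ (fun e' h' => by
          obtain ⟨v, hv, hve⟩ := hC e' h'
          exact ⟨v, Finset.mem_insert_of_mem hv, hve⟩) (Or.inl (Finset.mem_insert_self u C)))
        rw [sfn_insert b C u hu] at hc
        linarith
      have hw' : 0 ≤ sfn b C + 2 * b w := by
        have hc := hK0 (insert w C) (hext _ (fun e' h' => by
          obtain ⟨v, hv, hve⟩ := hC e' h'
          exact ⟨v, Finset.mem_insert_of_mem hv, hve⟩) (Or.inr (Finset.mem_insert_self w C)))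
        rw [sfn_insert b C w hw] at hc
        linarith
      have hm' : -(sfn b C) / 2 ≤ m := by
        apply Finset.le_min'
        intro y hy
        obtain ⟨D, hD, rfl⟩ := Finset.mem_image.mp hy
        have := hlat C hC hu hw D hD
        linarith
      have : -(sfn b C) / 2 ≤ α := le_min (by linarith) (le_min (by linarith) hm')
      linarith
    -- new demand vector
    set b' : V → ℝ := fun v => b v - (if v = u then α else 0) - (if v = w then α else 0)
      with hb'
    have hb'0 : ∀ v, 0 ≤ b' v := by
      intro v
      by_cases h1 : v = u
      · simp only [hb', h1, if_pos rfl, if_neg hune, if_true]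
        linarith
      · by_cases h2 : v = w
        · simp only [hb', h1, h2, if_neg (h2 ▸ h1 : ¬ (w = u)), if_pos rfl, if_true]
          linarith
        · simp only [hb', if_neg h1, if_neg h2]
          simpa using hb v
    have hsum' : ∀ A : Finset V, ∑ v ∈ A, b' v =
        ∑ v ∈ A, b v - (if u ∈ A then α else 0) - (if w ∈ A then α else 0) := by
      intro A
      simp only [hb', Finset.sum_sub_distrib]
      congr 1
      · congr 1
        simp [Finset.sum_ite_eq']
      · simp [Finset.sum_ite_eq']
    have hcov' : ∀ C : Finset V, (∀ e' ∈ s, ∃ v ∈ C, v ∈ ends e') →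
        ∑ v ∈ Cᶜ, b' v ≤ ∑ v ∈ C, b' v := by
      intro C hC
      rw [hsum' C, hsum' Cᶜ]
      by_cases hu : u ∈ C <;> by_cases hw : w ∈ C
      · have hCP : C ∈ P := (hPmem C).mpr ⟨hC, hu, hw⟩
        have h3 := hαP C hCP
        rw [if_pos hu, if_pos hw, if_neg (fun h => (Finset.mem_compl.mp h) hu),
          if_neg (fun h => (Finset.mem_compl.mp h) hw)]
        rw [sfn] at h3
        linarith
      · have h0 := hK0 C (hext C hC (Or.inl hu))
        rw [if_pos hu, if_neg hw, if_neg (fun h => (Finset.mem_compl.mp h) hu),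
          if_pos (Finset.mem_compl.mpr hw)]
        rw [sfn] at h0
        linarith
      · have h0 := hK0 C (hext C hC (Or.inr hw))
        rw [if_neg hu, if_pos hw, if_pos (Finset.mem_compl.mpr hu),
          if_neg (fun h => (Finset.mem_compl.mp h) hw)]
        rw [sfn] at h0
        linarith
      · have h0 := hlow C hC hu hw
        rw [if_neg hu, if_neg hw, if_pos (Finset.mem_compl.mpr hu),
          if_pos (Finset.mem_compl.mpr hw)]
        rw [sfn] at h0
        linarith
    obtain ⟨x', hx'0, hx'z, hx'deg⟩ := ih b' hb'0 hcov'
    refine ⟨fun e' => if e' = e then α else x' e', ?_, ?_, ?_⟩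
    · intro e'
      show 0 ≤ if e' = e then α else x' e'
      by_cases h : e' = e
      · rw [if_pos h]; exact hα0
      · rw [if_neg h]; exact hx'0 e'
    · intro e' he'
      show (if e' = e then α else x' e') = 0
      have h1 : e' ≠ e := fun h => he' (h ▸ Finset.mem_insert_self e s)
      have h2 : e' ∉ s := fun h => he' (Finset.mem_insert_of_mem h)
      rw [if_neg h1]; exact hx'z e' h2
    · intro v
      show (∑ e' : E, if v ∈ ends e' then (if e' = e then α else x' e') else 0) = b v
      have hxe : x' e = 0 := hx'z e he
      have hterm : ∀ e' : E, (if v ∈ ends e' then (if e' = e then α else x' e') else 0) =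
          (if e' = e then (if v ∈ ends e then α else 0) else 0) +
          (if v ∈ ends e' then x' e' else 0) := by
        intro e'
        by_cases h : e' = e
        · subst h
          simp [hxe]
        · simp [h]
      have hsplit : ∑ e' : E, (if v ∈ ends e' then (if e' = e then α else x' e') else 0) =
          (if v ∈ ends e then α else 0) + ∑ e' : E, (if v ∈ ends e' then x' e' else 0) := by
        simp only [hterm]
        rw [Finset.sum_add_distrib]
        congr 1
        simp [Finset.sum_ite_eq']
      rw [hsplit, hx'deg v]
      by_cases h1 : v = u
      · rw [if_pos ((mem_e v).mpr (Or.inl h1))]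
        simp only [hb', h1, if_pos rfl, if_neg hune, if_true]
        ring
      · by_cases h2 : v = w
        · rw [if_pos ((mem_e v).mpr (Or.inr h2))]
          simp only [hb', h2, if_neg (h2 ▸ h1 : ¬ (w = u)), if_pos rfl, if_true]
          ring
        · rw [if_neg (fun h => by rcases (mem_e v).mp h with h | h; exact h1 h; exact h2 h)]
          simp only [hb', if_neg h1, if_neg h2]
          ring

theorem PGb_nonempty_iff_bipartite [Fintype V] [DecidableEq V] [Fintype E]
    (ends : E → Sym2 V) (b : V → ℝ)
    (hbip : ∃ f : V → Bool, ∀ (e : E) (u w : V), ends e = s(u, w) → f u ≠ f w)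
    (hb : ∀ v, 0 ≤ b v) :
    (PGb ends b).Nonempty ↔
      ∀ C : Finset V, (∀ e : E, ∃ v ∈ C, v ∈ ends e) →
        ∑ v ∈ Cᶜ, b v ≤ ∑ v ∈ C, b v := by
  obtain ⟨f, hf⟩ := hbip
  have hends : ∀ e' : E, ∃ p q : V, ends e' = s(p, q) ∧ f p = true ∧ f q = false := by
    intro e'
    obtain ⟨⟨p, q⟩, h⟩ := Quot.exists_rep (ends e')
    have hpq : ends e' = s(p, q) := h.symm
    have hne := hf e' p q hpq
    by_cases hp : f p = true
    · refine ⟨p, q, hpq, hp, ?_⟩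
      cases hq : f q
      · rfl
      · rw [hp, hq] at hne; exact absurd rfl hne
    · have hp' : f p = false := by cases h2 : f p; rfl; exact absurd h2 hp
      have hq : f q = true := by
        cases h2 : f q
        · rw [hp', h2] at hne; exact absurd rfl hne
        · rfl
      exact ⟨q, p, by rw [hpq, Sym2.eq_swap], hq, hp'⟩
  choose p q hpq hfp hfq using hends
  have hpqne : ∀ e, p e ≠ q e := by
    intro e h
    have h2 := hfp e
    rw [h, hfq e] at h2
    exact Bool.noConfusion h2
  have hite : ∀ (x : E → ℝ), (x ∈ PGb ends b) ↔
      ((∀ e, 0 ≤ x e) ∧ ∀ v : V, ∑ e : E, (if v ∈ ends e then x e else 0) = b v) := by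
    intro x
    constructor
    · rintro ⟨h1, h2⟩
      refine ⟨h1, fun v => ?_⟩
      rw [← h2 v]
      exact Finset.sum_congr rfl (fun e _ => by congr)
    · rintro ⟨h1, h2⟩
      refine ⟨h1, fun v => ?_⟩
      rw [← h2 v]
      exact Finset.sum_congr rfl (fun e _ => by congr)
  constructor
  · rintro ⟨x, hx⟩ C hC
    obtain ⟨hx0, hxdeg⟩ := (hite x).mp hx
    have key : ∀ A : Finset V, ∑ v ∈ A, b v =
        ∑ e : E, ((if p e ∈ A then x e else 0) + (if q e ∈ A then x e else 0)) := by
      intro A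
      have h1 : ∑ v ∈ A, b v = ∑ v ∈ A, ∑ e : E, (if v ∈ ends e then x e else 0) := by
        apply Finset.sum_congr rfl
        intro v _
        rw [hxdeg v]
      rw [h1, Finset.sum_comm]
      apply Finset.sum_congr rfl
      intro e _
      have hsplit : ∀ v, (if v ∈ ends e then x e else 0) =
          (if v = p e then x e else 0) + (if v = q e then x e else 0) := by
        intro v
        have hm : v ∈ ends e ↔ v = p e ∨ v = q e := by
          rw [hpq e]; exact Sym2.mem_iff
        by_cases h1 : v = p e
        · have h2 : v ≠ q e := fun h' => hpqne e (h1 ▸ h' ▸ rfl)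
          rw [if_pos (hm.mpr (Or.inl h1)), if_pos h1, if_neg h2]
          ring
        · by_cases h2 : v = q e
          · rw [if_pos (hm.mpr (Or.inr h2)), if_neg h1, if_pos h2]
            ring
          · rw [if_neg (fun h' => by rcases hm.mp h' with h | h; exact h1 h; exact h2 h),
              if_neg h1, if_neg h2]
            ring
      simp only [hsplit]
      rw [Finset.sum_add_distrib]
      congr 1
      · simp [Finset.sum_ite_eq']
      · simp [Finset.sum_ite_eq']
    rw [key C, key Cᶜ]
    apply Finset.sum_le_sum
    intro e _
    have hcov : p e ∈ C ∨ q e ∈ C := by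
      obtain ⟨v, hv, hve⟩ := hC e
      rw [hpq e, Sym2.mem_iff] at hve
      rcases hve with rfl | rfl
      · exact Or.inl hv
      · exact Or.inr hv
    have hx := hx0 e
    by_cases h1 : p e ∈ C <;> by_cases h2 : q e ∈ C
    · rw [if_pos h1, if_pos h2, if_neg (fun h => (Finset.mem_compl.mp h) h1),
        if_neg (fun h => (Finset.mem_compl.mp h) h2)]
      linarith
    · rw [if_pos h1, if_neg h2, if_neg (fun h => (Finset.mem_compl.mp h) h1),
        if_pos (Finset.mem_compl.mpr h2)]
      linarith
    · rw [if_neg h1, if_pos h2, if_pos (Finset.mem_compl.mpr h1),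
        if_neg (fun h => (Finset.mem_compl.mp h) h2)]
      linarith
    · exact absurd hcov (by simp [h1, h2])
  · intro hcov
    obtain ⟨x, hx0, _, hxdeg⟩ := exists_matching_aux ends f hf Finset.univ b hb
      (fun C hC => hcov C (fun e => hC e (mem_univ e)))
    exact ⟨x, (hite x).mpr ⟨hx0, hxdeg⟩⟩
end

section
/- For an arbitrary finite graph G and nonnegative b : V → R, the polytope P(G,b) is nonempty if and only if for all partitions V = V1 ⊔ V2 ⊔ V3 of the vertex set such that G has no edge with both endpoints in V3 and no edge between V2 and V3, the sum of b over V1 is at least the sum of b over V3. -/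
open Finset
open scoped Classical

variable {V E : Type}

section ConeClosed

variable {ι H : Type} [Fintype ι] [NormedAddCommGroup H] [NormedSpace ℝ H]
  [FiniteDimensional ℝ H]

noncomputable def sumMapL (c : ι → H) : (ι → ℝ) →ₗ[ℝ] H where
  toFun x := ∑ i, x i • c i
  map_add' x y := by simp [add_smul, Finset.sum_add_distrib]
  map_smul' r x := by simp [smul_smul, Finset.smul_sum]

lemma cone_isClosed (c : ι → H) (S : Finset ι) :
    IsClosed {z : H | ∃ x : ι → ℝ, (∀ i, 0 ≤ x i) ∧ (∀ i ∉ S, x i = 0) ∧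
      ∑ i ∈ S, x i • c i = z} := by
  induction S using Finset.strongInduction with
  | _ S ih =>
  by_cases hli : LinearIndependent ℝ (fun i : S => c i)
  · have hker : LinearMap.ker (sumMapL (fun i : S => c i)) = ⊥ := by
      rw [LinearMap.ker_eq_bot']
      intro g hg
      funext i
      exact Fintype.linearIndependent_iff.mp hli g hg i
    have hemb := LinearMap.isClosedEmbedding_of_injective hker
    have horth : IsClosed {x : ↥S → ℝ | ∀ i, 0 ≤ x i} := by
      have : {x : ↥S → ℝ | ∀ i, 0 ≤ x i} = ⋂ i, {x | 0 ≤ x i} := by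
        ext; simp [Set.mem_iInter]
      rw [this]
      exact isClosed_iInter fun i => isClosed_le continuous_const (continuous_apply i)
    have himg := hemb.isClosedMap _ horth
    convert himg using 1
    ext z
    constructor
    · rintro ⟨x, hx0, hxS, rfl⟩
      refine ⟨fun i => x i, fun i => hx0 i, ?_⟩
      show ∑ i : ↥S, x ↑i • c ↑i = _
      exact Finset.sum_coe_sort S (fun i => x i • c i)
    · rintro ⟨g, hg0, rfl⟩
      refine ⟨fun i => if h : i ∈ S then g ⟨i, h⟩ else 0, ?_, ?_, ?_⟩
      · intro i
        by_cases h : i ∈ S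
        · simpa [h] using hg0 ⟨i, h⟩
        · simp [h]
      · intro i hi; simp [hi]
      · show _ = ∑ i : ↥S, g i • c ↑i
        rw [← Finset.sum_coe_sort S]
        exact Finset.sum_congr rfl fun i _ => by simp [i.2]
  · obtain ⟨g, hgsum, j, hgj⟩ := Fintype.not_linearIndependent_iff.mp hli
    -- arrange a positive coefficient
    obtain ⟨g, hgsum, j, hgj⟩ : ∃ g : ↥S → ℝ, ∑ i : ↥S, g i • c ↑i = 0 ∧ ∃ j, 0 < g j := by
      rcases hgj.lt_or_gt with h | h
      · exact ⟨-g, by simpa [neg_smul] using congrArg Neg.neg hgsum, j, by simpa using h⟩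
      · exact ⟨g, hgsum, j, h⟩
    set lam : ι → ℝ := fun i => if h : i ∈ S then g ⟨i, h⟩ else 0 with hlam
    have hlamsum : ∑ i ∈ S, lam i • c i = 0 := by
      rw [← Finset.sum_coe_sort S]
      rw [← hgsum]
      exact Finset.sum_congr rfl fun i _ => by simp [hlam, i.2]
    have hP : (j : ι) ∈ S.filter (fun i => 0 < lam i) := by
      simp only [Finset.mem_filter]
      exact ⟨j.2, by simp [hlam, j.2, hgj]⟩
    have hsubset : ∀ i ∈ S.filter (fun i => 0 < lam i), S.erase i ⊂ S :=
      fun i hi => Finset.erase_ssubset (Finset.mem_filter.mp hi).1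
    have : {z : H | ∃ x : ι → ℝ, (∀ i, 0 ≤ x i) ∧ (∀ i ∉ S, x i = 0) ∧
        ∑ i ∈ S, x i • c i = z}
        = ⋃ i ∈ (S.filter (fun i => 0 < lam i) : Finset ι),
            {z : H | ∃ x : ι → ℝ, (∀ i, 0 ≤ x i) ∧ (∀ i' ∉ S.erase i, x i' = 0) ∧
              ∑ i' ∈ S.erase i, x i' • c i' = z} := by
      ext z
      simp only [Set.mem_setOf_eq, Set.mem_iUnion]
      constructor
      · rintro ⟨x, hx0, hxS, rfl⟩
        set P := S.filter (fun i => 0 < lam i) with hPdef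
        have hPne : P.Nonempty := ⟨j, hP⟩
        obtain ⟨i₀, hi₀P, hi₀min⟩ := P.exists_min_image (fun i => x i / lam i) hPne
        have hlami₀ : 0 < lam i₀ := (Finset.mem_filter.mp hi₀P).2
        set t := x i₀ / lam i₀ with ht
        have ht0 : 0 ≤ t := div_nonneg (hx0 i₀) hlami₀.le
        have htle : ∀ i ∈ P, t * lam i ≤ x i := by
          intro i hi
          have h1 : t ≤ x i / lam i := hi₀min i hi
          have h2 : 0 < lam i := (Finset.mem_filter.mp hi).2
          calc t * lam i ≤ (x i / lam i) * lam i := by nlinarith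
            _ = x i := by field_simp
        have hti₀ : x i₀ - t * lam i₀ = 0 := by
          rw [ht]; field_simp; ring
        refine ⟨i₀, hi₀P, fun i => x i - t * lam i, ?_, ?_, ?_⟩
        · intro i
          dsimp only
          by_cases hpos : 0 < lam i
          · have hiS : i ∈ S := by
              by_contra hiS
              simp [hlam, hiS] at hpos
            have := htle i (Finset.mem_filter.mpr ⟨hiS, hpos⟩)
            linarith
          · push_neg at hpos
            nlinarith [hx0 i]
        · intro i hi
          by_cases hiS : i ∈ S
          · have : i = i₀ := by
              by_contra hne'
              exact hi (Finset.mem_erase.mpr ⟨hne', hiS⟩)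
            subst this
            exact hti₀
          · simp [hxS i hiS, hlam, hiS]
        · have hsum1 : ∑ i ∈ S.erase i₀, (x i - t * lam i) • c i
              = ∑ i ∈ S, (x i - t * lam i) • c i := by
            apply Finset.sum_subset (Finset.erase_subset _ _)
            intro i hiS hi
            have : i = i₀ := by
              by_contra hne'
              exact hi (Finset.mem_erase.mpr ⟨hne', hiS⟩)
            subst this
            rw [hti₀, zero_smul]
          rw [hsum1]
          have : ∑ i ∈ S, (x i - t * lam i) • c i
              = ∑ i ∈ S, x i • c i - t • ∑ i ∈ S, lam i • c i := by
            rw [Finset.smul_sum, ← Finset.sum_sub_distrib]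
            exact Finset.sum_congr rfl fun i _ => by
              rw [sub_smul, smul_smul]
          rw [this, hlamsum, smul_zero, sub_zero]
      · rintro ⟨i, hiP, x, hx0, hxE, rfl⟩
        refine ⟨x, hx0, ?_, ?_⟩
        · intro i' hi'
          exact hxE i' fun h => hi' (Finset.erase_subset _ _ h)
        · exact (Finset.sum_subset (Finset.erase_subset _ _) fun i' hi' hni' => by
            rw [hxE i' hni', zero_smul]).symm
    rw [this]
    apply Set.Finite.isClosed_biUnion (Finset.finite_toSet _)
    intro i hi
    exact ih _ (hsubset i hi)

end ConeClosed

section Farkas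

open scoped RealInnerProductSpace

variable {ι H : Type} [Fintype ι] [NormedAddCommGroup H] [InnerProductSpace ℝ H]
  [FiniteDimensional ℝ H]

lemma farkas (c : ι → H) (b : H)
    (h : ∀ y : H, (∀ i, 0 ≤ ⟪c i, y⟫) → 0 ≤ ⟪b, y⟫) :
    ∃ x : ι → ℝ, (∀ i, 0 ≤ x i) ∧ ∑ i, x i • c i = b := by
  by_contra hcon
  set K : ConvexCone ℝ H :=
    { carrier := {z : H | ∃ x : ι → ℝ, (∀ i, 0 ≤ x i) ∧ ∑ i, x i • c i = z}
      smul_mem' := by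
        rintro r hr z ⟨x, hx0, rfl⟩
        exact ⟨fun i => r * x i, fun i => mul_nonneg hr.le (hx0 i), by
          rw [Finset.smul_sum]
          exact Finset.sum_congr rfl fun i _ => by rw [smul_smul]⟩
      add_mem' := by
        rintro z ⟨x, hx0, rfl⟩ w ⟨x', hx'0, rfl⟩
        exact ⟨fun i => x i + x' i, fun i => add_nonneg (hx0 i) (hx'0 i), by
          rw [← Finset.sum_add_distrib]
          exact Finset.sum_congr rfl fun i _ => by rw [add_smul]⟩ } with hK
  have hne : (K : Set H).Nonempty :=
    ⟨0, fun _ => 0, fun i => le_refl 0, by simp⟩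
  have hcl : IsClosed (K : Set H) := by
    have h1 := cone_isClosed c (Finset.univ : Finset ι)
    have : (K : Set H) = {z : H | ∃ x : ι → ℝ, (∀ i, 0 ≤ x i) ∧
        (∀ i ∉ (Finset.univ : Finset ι), x i = 0) ∧ ∑ i ∈ Finset.univ, x i • c i = z} := by
      ext z
      constructor
      · rintro ⟨x, hx0, rfl⟩; exact ⟨x, hx0, fun i hi => absurd (Finset.mem_univ i) hi, rfl⟩
      · rintro ⟨x, hx0, _, rfl⟩; exact ⟨x, hx0, rfl⟩
    rw [this]; exact h1
  have hbK : b ∉ K := fun ⟨x, hx0, hxe⟩ => hcon ⟨x, hx0, hxe⟩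
  obtain ⟨y, h1, h2⟩ : ∃ y, (∀ x ∈ K, 0 ≤ ⟪x, y⟫) ∧ ⟪y, b⟫ < 0 := by
    let C : ProperCone ℝ H :=
      { carrier := (K : Set H)
        add_mem' := fun ha hb => K.add_mem ha hb
        zero_mem' := ⟨fun _ => 0, fun _ => le_refl 0, by simp⟩
        smul_mem' := by
          rintro r z ⟨x, hx0, rfl⟩
          exact ⟨fun i => (r : ℝ) * x i, fun i => mul_nonneg r.2 (hx0 i), by
            rw [Finset.smul_sum]
            exact Finset.sum_congr rfl fun i _ => by rw [mul_smul]; rfl⟩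
        isClosed' := hcl }
    obtain ⟨y, hy1, hy2⟩ := ProperCone.hyperplane_separation' C (x₀ := b) hbK
    exact ⟨y, fun x hx => hy1 x hx, by rw [real_inner_comm]; exact hy2⟩
  have hci : ∀ i, 0 ≤ ⟪c i, y⟫ := by
    intro i
    refine h1 (c i) ⟨fun j => if j = i then 1 else 0, fun j => by positivity, ?_⟩
    simp [ite_smul]
  have := h y hci
  rw [real_inner_comm] at h2
  linarith

end Farkas

section Key

lemma key_ind [Fintype V] [DecidableEq V] [Fintype E] (ends : E → Sym2 V) (b : V → ℝ)
    (cond : ∀ V1 V2 V3 : Finset V,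
        V1 ∪ V2 ∪ V3 = Finset.univ →
        Disjoint V1 V2 → Disjoint V1 V3 → Disjoint V2 V3 →
        (∀ (e : E) (x y : V), ends e = s(x, y) → x ∈ V2 ∪ V3 → y ∉ V3) →
        ∑ v ∈ V3, b v ≤ ∑ v ∈ V1, b v) :
    ∀ (n : ℕ) (y : V → ℝ),
      ((Finset.univ.image fun v => |y v|).filter fun t => 0 < t).card ≤ n →
      (∀ (e : E) (u w : V), ends e = s(u, w) → 0 ≤ y u + y w) →
      0 ≤ ∑ v, b v * y v := by
  have hzero : ∀ y : V → ℝ,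
      ¬((Finset.univ.image fun v => |y v|).filter fun t => 0 < t).Nonempty →
      0 ≤ ∑ v, b v * y v := by
    intro y hne
    have : ∀ v, y v = 0 := by
      intro v
      by_contra hv
      exact hne ⟨|y v|, Finset.mem_filter.mpr
        ⟨Finset.mem_image_of_mem _ (Finset.mem_univ v), abs_pos.mpr hv⟩⟩
    simp [this]
  intro n
  induction n with
  | zero =>
    intro y hcard _
    apply hzero
    rw [← Finset.card_pos]
    omega
  | succ n ih =>
    intro y hcard hy
    set T := ((Finset.univ.image fun v => |y v|).filter fun t => 0 < t) with hT
    by_cases hne : T.Nonempty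
    case neg => exact hzero y hne
    have hmemT : ∀ v, y v ≠ 0 → |y v| ∈ T := fun v hv =>
      Finset.mem_filter.mpr ⟨Finset.mem_image_of_mem _ (Finset.mem_univ v), abs_pos.mpr hv⟩
    set s := T.max' hne with hs
    have hsT : s ∈ T := T.max'_mem hne
    have hs0 : 0 < s := (Finset.mem_filter.mp hsT).2
    have hsmax : ∀ v, |y v| ≤ s := by
      intro v
      by_cases hv : y v = 0
      · simp [hv, hs0.le]
      · exact T.le_max' _ (hmemT v hv)
    have hsns : s ≠ -s := by intro h; linarith
    set s' := if h : (T.erase s).Nonempty then (T.erase s).max' h else 0 with hs'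
    have hs'T : (T.erase s).Nonempty → s' ∈ T.erase s := by
      intro h; rw [hs', dif_pos h]; exact Finset.max'_mem _ _
    have hs'0 : 0 ≤ s' := by
      by_cases h : (T.erase s).Nonempty
      · exact ((Finset.mem_filter.mp (Finset.mem_of_mem_erase (hs'T h))).2).le
      · rw [hs', dif_neg h]
    have hs's : s' < s := by
      by_cases h : (T.erase s).Nonempty
      · exact lt_of_le_of_ne (T.le_max' _ (Finset.mem_of_mem_erase (hs'T h)))
          (Finset.ne_of_mem_erase (hs'T h))
      · rw [hs', dif_neg h]; exact hs0
    have hsmall : ∀ v, |y v| < s → |y v| ≤ s' := by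
      intro v hv
      by_cases hv0 : y v = 0
      · simp [hv0, hs'0]
      · have h1 : |y v| ∈ T.erase s := Finset.mem_erase.mpr ⟨ne_of_lt hv, hmemT v hv0⟩
        have h2 : (T.erase s).Nonempty := ⟨_, h1⟩
        rw [hs', dif_pos h2]
        exact Finset.le_max' _ _ h1
    have habs : ∀ v, y v ≠ s → y v ≠ -s → |y v| < s := by
      intro v h1 h2
      refine (hsmax v).lt_of_ne fun he => ?_
      rcases (abs_eq hs0.le).mp he with h | h
      · exact h1 h
      · exact h2 h
    set y' := fun v => if y v = s then s' else if y v = -s then -s' else y v with hy'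
    have hy'bound : ∀ v, |y' v| ≤ s' := by
      intro v
      rw [hy']; dsimp only
      by_cases h1 : y v = s
      · rw [if_pos h1, abs_of_nonneg hs'0]
      by_cases h2 : y v = -s
      · rw [if_neg h1, if_pos h2, abs_neg, abs_of_nonneg hs'0]
      · rw [if_neg h1, if_neg h2]
        exact hsmall v (habs v h1 h2)
    have hy'le : ∀ v, -s' ≤ y' v ∧ y' v ≤ s' := by
      intro v; have := hy'bound v; constructor <;> [linarith [neg_abs_le (y' v)]; linarith [le_abs_self (y' v)]]
    -- constraints for y'
    have hy'c : ∀ (e : E) (u w : V), ends e = s(u, w) → 0 ≤ y' u + y' w := by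
      intro e u w he
      have h0 := hy e u w he
      by_cases hu : y u = -s
      · have hwge : s ≤ y w := by rw [hu] at h0; linarith
        have hw : y w = s := le_antisymm (le_of_abs_le (hsmax w)) hwge
        have h1 : y u ≠ s := by rw [hu]; exact fun h => hsns h.symm
        have e1 : y' u = -s' := by rw [hy']; dsimp only; rw [if_neg h1, if_pos hu]
        have e2 : y' w = s' := by rw [hy']; dsimp only; rw [if_pos hw]
        rw [e1, e2]; linarith
      by_cases hw : y w = -s
      · have huge : s ≤ y u := by rw [hw] at h0; linarith
        have hu' : y u = s := le_antisymm (le_of_abs_le (hsmax u)) huge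
        have h1 : y w ≠ s := by rw [hw]; exact fun h => hsns h.symm
        have e1 : y' w = -s' := by rw [hy']; dsimp only; rw [if_neg h1, if_pos hw]
        have e2 : y' u = s' := by rw [hy']; dsimp only; rw [if_pos hu']
        rw [e1, e2]; linarith
      · by_cases hu1 : y u = s
        · have e1 : y' u = s' := by rw [hy']; dsimp only; rw [if_pos hu1]
          have e2 := (hy'le w).1
          rw [e1]; linarith
        by_cases hw1 : y w = s
        · have e1 : y' w = s' := by rw [hy']; dsimp only; rw [if_pos hw1]
          have e2 := (hy'le u).1
          rw [e1]; linarith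
        · have h1 : y' u = y u := by rw [hy']; dsimp only; rw [if_neg hu1, if_neg hu]
          have h2 : y' w = y w := by rw [hy']; dsimp only; rw [if_neg hw1, if_neg hw]
          rw [h1, h2]; exact h0
    -- card bound for y'
    have hsub : ((Finset.univ.image fun v => |y' v|).filter fun t => 0 < t) ⊆ T.erase s := by
      intro t ht
      obtain ⟨ht1, ht2⟩ := Finset.mem_filter.mp ht
      obtain ⟨v, _, rfl⟩ := Finset.mem_image.mp ht1
      have hne' : |y' v| ≠ 0 := ne_of_gt ht2
      have herase : (T.erase s).Nonempty := by
        by_contra h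
        have : s' = 0 := by rw [hs', dif_neg h]
        have hb := hy'bound v
        rw [this] at hb
        exact hne' (le_antisymm hb (abs_nonneg _))
      by_cases h1 : y v = s
      · have : y' v = s' := by rw [hy']; dsimp only; rw [if_pos h1]
        rw [this, abs_of_nonneg hs'0]
        exact hs'T herase
      by_cases h2 : y v = -s
      · have : y' v = -s' := by rw [hy']; dsimp only; rw [if_neg h1, if_pos h2]
        rw [this, abs_neg, abs_of_nonneg hs'0]
        exact hs'T herase
      · have hv : y' v = y v := by rw [hy']; dsimp only; rw [if_neg h1, if_neg h2]
        rw [hv] at ht2 ⊢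
        exact Finset.mem_erase.mpr ⟨ne_of_lt (habs v h1 h2), hmemT v (by
          intro h; rw [h] at ht2; simp at ht2)⟩
    have hcard' : ((Finset.univ.image fun v => |y' v|).filter fun t => 0 < t).card ≤ n := by
      have h1 := Finset.card_le_card hsub
      have h2 := Finset.card_erase_of_mem hsT
      omega
    have hIH := ih y' hcard' hy'c
    -- the partition inequality
    set g : V → ℝ := fun v => if y v = s then 1 else if y v = -s then -1 else 0 with hg
    have hgsum : 0 ≤ ∑ v, b v * g v := by
      set V1 := Finset.univ.filter (fun v => y v = s) with hV1
      set V3 := Finset.univ.filter (fun v => y v = -s) with hV3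
      set V2 := Finset.univ \ (V1 ∪ V3) with hV2
      have hmem1 : ∀ v, v ∈ V1 ↔ y v = s := by intro v; simp [hV1]
      have hmem3 : ∀ v, v ∈ V3 ↔ y v = -s := by intro v; simp [hV3]
      have hmem2 : ∀ v, v ∈ V2 ↔ (y v ≠ s ∧ y v ≠ -s) := by
        intro v; simp [hV2, hV1, hV3]
      have hcond : ∑ v ∈ V3, b v ≤ ∑ v ∈ V1, b v := by
        apply cond V1 V2 V3
        · ext v
          simp only [Finset.mem_union, Finset.mem_univ, iff_true]
          by_cases h1 : y v = s
          · exact Or.inl (Or.inl ((hmem1 v).mpr h1))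
          by_cases h2 : y v = -s
          · exact Or.inr ((hmem3 v).mpr h2)
          · exact Or.inl (Or.inr ((hmem2 v).mpr ⟨h1, h2⟩))
        · rw [Finset.disjoint_left]
          intro v h1 h2
          exact ((hmem2 v).mp h2).1 ((hmem1 v).mp h1)
        · rw [Finset.disjoint_left]
          intro v h1 h3
          exact hsns (((hmem1 v).mp h1).symm.trans ((hmem3 v).mp h3))
        · rw [Finset.disjoint_left]
          intro v h2 h3
          exact ((hmem2 v).mp h2).2 ((hmem3 v).mp h3)
        · intro e xx z he hx hz
          have hz' : y z = -s := (hmem3 z).mp hz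
          have h0 := hy e xx z he
          have hxs : y xx = s := by
            have : s ≤ y xx := by rw [hz'] at h0; linarith
            exact le_antisymm (le_of_abs_le (hsmax xx)) this
          rcases Finset.mem_union.mp hx with h2 | h3
          · exact ((hmem2 xx).mp h2).1 hxs
          · exact hsns (hxs.symm.trans ((hmem3 xx).mp h3))
      have hexp : ∑ v, b v * g v = ∑ v ∈ V1, b v - ∑ v ∈ V3, b v := by
        have h1 : ∀ v, b v * g v
            = (if y v = s then b v else 0) - (if y v = -s then b v else 0) := by
          intro v
          rw [hg]; dsimp only
          by_cases h1 : y v = s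
          · have h2 : ¬ y v = -s := by rw [h1]; exact fun h => hsns h
            rw [if_pos h1, if_pos h1, if_neg h2]; ring
          by_cases h2 : y v = -s
          · rw [if_neg h1, if_neg h1, if_pos h2, if_pos h2]; ring
          · rw [if_neg h1, if_neg h1, if_neg h2, if_neg h2]; ring
        rw [Finset.sum_congr rfl fun v _ => h1 v, Finset.sum_sub_distrib,
          hV1, hV3, ← Finset.sum_filter, ← Finset.sum_filter]
      rw [hexp]
      linarith
    -- decompose
    have hdec : ∀ v, b v * y v = b v * y' v + (s - s') * (b v * g v) := by
      intro v
      rw [hy', hg]; dsimp only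
      by_cases h1 : y v = s
      · rw [if_pos h1, if_pos h1, h1]; ring
      by_cases h2 : y v = -s
      · rw [if_neg h1, if_neg h1, if_pos h2, if_pos h2, h2]; ring
      · rw [if_neg h1, if_neg h1, if_neg h2, if_neg h2]; ring
    rw [Finset.sum_congr rfl fun v _ => hdec v, Finset.sum_add_distrib, ← Finset.mul_sum]
    have := mul_nonneg (by linarith : (0:ℝ) ≤ s - s') hgsum
    linarith

end Key


open scoped RealInnerProductSpace in
theorem PGb_nonempty_iff [Fintype V] [DecidableEq V] [Fintype E]
    (ends : E → Sym2 V) (b : V → ℝ) (hb : ∀ v, 0 ≤ b v) :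
    (PGb ends b).Nonempty ↔
      ∀ V1 V2 V3 : Finset V,
        V1 ∪ V2 ∪ V3 = Finset.univ →
        Disjoint V1 V2 → Disjoint V1 V3 → Disjoint V2 V3 →
        (∀ (e : E) (x y : V), ends e = s(x, y) → x ∈ V2 ∪ V3 → y ∉ V3) →
        ∑ v ∈ V3, b v ≤ ∑ v ∈ V1, b v := by
  have hite : ∀ (p : Prop) (i1 i2 : Decidable p) (a d : ℝ), @ite ℝ p i1 a d = @ite ℝ p i2 a d :=
    fun p i1 i2 a d => by congr
  constructor
  · rintro ⟨x, hx0, hxv0⟩ V1 V2 V3 hunion h12 h13 h23 hedge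
    have hxv : ∀ v, (∑ e : E, if v ∈ ends e then x e else 0) = b v := fun v => by
      rw [← hxv0 v]
      exact Finset.sum_congr rfl fun e _ => hite _ _ _ _ _
    have key : ∀ e : E, ((V3.filter (· ∈ ends e)).card : ℝ) * x e
        ≤ ((V1.filter (· ∈ ends e)).card : ℝ) * x e := by
      intro e
      rcases Finset.eq_empty_or_nonempty (V3.filter (· ∈ ends e)) with h | ⟨u, hu⟩
      · rw [h]
        simp only [Finset.card_empty, Nat.cast_zero, zero_mul]
        exact mul_nonneg (Nat.cast_nonneg _) (hx0 e)
      · obtain ⟨hu3, hue⟩ := Finset.mem_filter.mp hu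
        obtain ⟨w, hew⟩ := Sym2.mem_iff_exists.mp hue
        have hwn3 : w ∉ V3 := hedge e u w hew (Finset.mem_union_right _ hu3)
        have hwn2 : w ∉ V2 := fun hw2 =>
          (hedge e w u (by rw [hew, Sym2.eq_swap]) (Finset.mem_union_left _ hw2)) hu3
        have hw1 : w ∈ V1 := by
          have hwu : w ∈ V1 ∪ V2 ∪ V3 := hunion ▸ Finset.mem_univ w
          rcases Finset.mem_union.mp hwu with h | h
          · rcases Finset.mem_union.mp h with h | h
            · exact h
            · exact absurd h hwn2
          · exact absurd h hwn3
        have hc3 : V3.filter (· ∈ ends e) ⊆ {u} := by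
          intro v hv
          obtain ⟨hv3, hve⟩ := Finset.mem_filter.mp hv
          rw [hew, Sym2.mem_iff] at hve
          rcases hve with rfl | rfl
          · exact Finset.mem_singleton.mpr rfl
          · exact absurd hv3 hwn3
        have hc1 : ({w} : Finset V) ⊆ V1.filter (· ∈ ends e) := by
          intro v hv
          rw [Finset.mem_singleton] at hv
          subst hv
          exact Finset.mem_filter.mpr ⟨hw1, by rw [hew]; exact Sym2.mem_mk_right _ _⟩
        have h3c : (V3.filter (· ∈ ends e)).card ≤ 1 := by
          simpa using Finset.card_le_card hc3
        have h1c : 1 ≤ (V1.filter (· ∈ ends e)).card := by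
          simpa using Finset.card_le_card hc1
        exact mul_le_mul_of_nonneg_right (by exact_mod_cast le_trans h3c h1c) (hx0 e)
    have hswap : ∀ W : Finset V, ∑ v ∈ W, b v
        = ∑ e, ((W.filter (· ∈ ends e)).card : ℝ) * x e := by
      intro W
      calc ∑ v ∈ W, b v = ∑ v ∈ W, ∑ e, (if v ∈ ends e then x e else 0) :=
            Finset.sum_congr rfl fun v _ => (hxv v).symm
        _ = ∑ e, ∑ v ∈ W, (if v ∈ ends e then x e else 0) := Finset.sum_comm
        _ = ∑ e, ((W.filter (· ∈ ends e)).card : ℝ) * x e := by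
            refine Finset.sum_congr rfl fun e _ => ?_
            rw [← Finset.sum_filter, Finset.sum_const, nsmul_eq_mul]
    rw [hswap V3, hswap V1]
    exact Finset.sum_le_sum fun e _ => key e
  · intro hcond
    set c : E → EuclideanSpace ℝ V := fun e => WithLp.toLp 2 (fun v => if v ∈ ends e then (1 : ℝ) else 0) with hc
    set bb : EuclideanSpace ℝ V := WithLp.toLp 2 (fun v => b v) with hbb
    have hinner : ∀ (e : E) (y : EuclideanSpace ℝ V),
        ⟪c e, y⟫ = ∑ v, (if v ∈ ends e then y v else 0) := by
      intro e y
      rw [PiLp.inner_apply]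
      refine Finset.sum_congr rfl fun v _ => ?_
      by_cases h : v ∈ ends e <;> simp [hc, h, RCLike.inner_apply]
    have hmain : ∀ y : EuclideanSpace ℝ V, (∀ e, 0 ≤ ⟪c e, y⟫) → 0 ≤ ⟪bb, y⟫ := by
      intro y hy
      have hyc : ∀ (e : E) (u w : V), ends e = s(u, w) → 0 ≤ y u + y w := by
        intro e u w he
        have h0 := hy e
        rw [hinner e y] at h0
        have hfe : Finset.univ.filter (· ∈ ends e) = ({u, w} : Finset V) := by
          ext v
          simp [he, Sym2.mem_iff]
        rw [← Finset.sum_filter, hfe] at h0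
        by_cases huw : u = w
        · subst huw
          rw [Finset.insert_eq_self.mpr (Finset.mem_singleton_self u), Finset.sum_singleton] at h0
          linarith
        · rw [Finset.sum_pair huw] at h0
          exact h0
      have hkey := key_ind ends b hcond _ y le_rfl hyc
      have : ⟪bb, y⟫ = ∑ v, b v * y v := by
        rw [PiLp.inner_apply]
        exact Finset.sum_congr rfl fun v _ => by simp [hbb, RCLike.inner_apply, mul_comm]
      rw [this]
      exact hkey
    obtain ⟨x, hx0, hxsum⟩ := farkas (H := EuclideanSpace ℝ V) c bb hmain
    refine ⟨x, hx0, fun v => ?_⟩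
    have happ := congrArg (EuclideanSpace.projₗ (𝕜 := ℝ) v) hxsum
    rw [map_sum] at happ
    have : ∀ e, EuclideanSpace.projₗ (𝕜 := ℝ) v (x e • c e) = if v ∈ ends e then x e else 0 := by
      intro e
      rw [map_smul]
      by_cases h : v ∈ ends e <;> simp [hc, h, EuclideanSpace.projₗ]
    rw [Finset.sum_congr rfl fun e _ => this e] at happ
    have hfin : (EuclideanSpace.projₗ (𝕜 := ℝ) v) bb = b v := by
      simp [hbb, EuclideanSpace.projₗ]
    rw [← happ] at hfin
    exact (Finset.sum_congr rfl fun e _ => hite _ _ _ _ _).trans hfin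
end

section
/- Let u be a vertex of P(G,b) and H its graph (the spanning subgraph with edges {e : u_e > 0}). Then u is the unique element of P(G,b) whose graph equals H; moreover u is the unique element of P(G,b) whose graph is contained in H. Conversely, if an element u of P(G,b) is the unique element whose graph is contained in its own graph, then u is a vertex of P(G,b). -/
open Finset
open scoped Classical

variable {V E : Type}

theorem vertex_PGb_unique_graph [Fintype V] [Fintype E] (ends : E → Sym2 V)
    (b : V → ℝ) (hb : ∀ v, 0 ≤ b v) (hb0 : b ≠ 0)
    (u : E → ℝ) (hu : u ∈ PGb ends b) :
    (u ∈ Set.extremePoints ℝ (PGb ends b) →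
      (∀ x ∈ PGb ends b, {e : E | 0 < x e} = {e : E | 0 < u e} → x = u) ∧
      (∀ x ∈ PGb ends b, {e : E | 0 < x e} ⊆ {e : E | 0 < u e} → x = u)) ∧
    ((∀ x ∈ PGb ends b, {e : E | 0 < x e} ⊆ {e : E | 0 < u e} → x = u) →
      u ∈ Set.extremePoints ℝ (PGb ends b)) := by
  have key : u ∈ Set.extremePoints ℝ (PGb ends b) →
      ∀ x ∈ PGb ends b, {e : E | 0 < x e} ⊆ {e : E | 0 < u e} → x = u := by
    intro hext x hx hsub
    by_contra hne
    obtain ⟨hx0, hxs⟩ := hx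
    obtain ⟨hu0, hus⟩ := hu
    set s : Finset ℝ :=
      insert 1 (Finset.univ.image fun e => if u e < x e then u e / (x e - u e) else 1) with hs
    have hsne : s.Nonempty := ⟨1, Finset.mem_insert_self _ _⟩
    set t := s.min' hsne with ht
    have hue_pos : ∀ e, u e < x e → 0 < u e := by
      intro e hlt
      rcases lt_or_eq_of_le (hu0 e) with h' | h'
      · exact h'
      · exact absurd (hsub (h' ▸ hlt : 0 < x e)) (by simp [← h'])
    have htpos : 0 < t := by
      apply (Finset.lt_min'_iff s hsne).2
      intro r hr
      rcases Finset.mem_insert.1 hr with h | h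
      · simp [h]
      · obtain ⟨e, _, he⟩ := Finset.mem_image.1 h
        subst he
        by_cases hlt : u e < x e
        · simp only [if_pos hlt]
          exact div_pos (hue_pos e hlt) (sub_pos.2 hlt)
        · simp [hlt]
    have htle : ∀ e, u e < x e → t * (x e - u e) ≤ u e := by
      intro e hlt
      have hmem : (u e / (x e - u e)) ∈ s := by
        refine Finset.mem_insert_of_mem (Finset.mem_image.2 ⟨e, Finset.mem_univ e, ?_⟩)
        simp [hlt]
      have := Finset.min'_le s _ hmem
      calc t * (x e - u e) ≤ (u e / (x e - u e)) * (x e - u e) := by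
            apply mul_le_mul_of_nonneg_right (ht ▸ this) (le_of_lt (sub_pos.2 hlt))
        _ = u e := div_mul_cancel₀ _ (ne_of_gt (sub_pos.2 hlt))
    set y : E → ℝ := fun e => (1 + t) * u e - t * x e with hy
    have hyP : y ∈ PGb ends b := by
      constructor
      · intro e
        by_cases hlt : u e < x e
        · have := htle e hlt
          simp only [hy]; nlinarith
        · push_neg at hlt
          simp only [hy]; nlinarith [hu0 e, htpos]
      · intro v
        have : ∀ e, (if v ∈ ends e then y e else 0)
            = (1 + t) * (if v ∈ ends e then u e else 0) - t * (if v ∈ ends e then x e else 0) := by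
          intro e; by_cases h : v ∈ ends e <;> simp [h, hy]
        rw [Finset.sum_congr rfl fun e _ => this e, Finset.sum_sub_distrib,
          ← Finset.mul_sum, ← Finset.mul_sum, hus v, hxs v]
        ring
    have hseg : u ∈ openSegment ℝ x y := by
      refine ⟨t / (1 + t), 1 / (1 + t), by positivity, by positivity, ?_, ?_⟩
      · field_simp
        ring
      · funext e
        simp only [Pi.add_apply, Pi.smul_apply, smul_eq_mul, hy]
        field_simp
        ring
    exact hne (hext.2 ⟨hx0, hxs⟩ hyP hseg)
  constructor
  · intro hext
    refine ⟨fun x hx heq => key hext x hx heq.subset, key hext⟩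
  · intro huniq
    refine ⟨hu, ?_⟩
    intro x₁ h₁ x₂ h₂ hseg
    obtain ⟨a, c, ha, hc, hac, hsum⟩ := hseg
    have hcomb : ∀ e, a * x₁ e + c * x₂ e = u e := by
      intro e; exact congrFun hsum e
    have h1 : x₁ = u := by
      apply huniq x₁ h₁
      intro e he
      have he' : 0 < x₁ e := he
      have : 0 < u e := by nlinarith [h₂.1 e, hcomb e, mul_pos ha he']
      exact this
    have h2 : x₂ = u := by
      apply huniq x₂ h₂
      intro e he
      have he' : 0 < x₂ e := he
      have : 0 < u e := by nlinarith [h₁.1 e, hcomb e, mul_pos hc he']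
      exact this
    exact h1
end
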